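/- arXiv:1806.10644 — 4 statements merged into one kernel-verified Lean document; each statement's English description precedes it below -/
import Mathlib

section
/- Consider the multi-parametric quadratic program: minimize over ũ ∈ ℝ^m the objective ũᵀ F ũ + xᵀ G ũ subject to C_c ũ ≤ T x + c_c, where F ∈ ℝ^{m×m} is symmetric positive definite, G ∈ ℝ^{n_x×m}, C_c ∈ ℝ^{q×m}, T ∈ ℝ^{q×n_x}, c_c ∈ ℝ^q, and the parameter is x ∈ ℝ^{n_x}. Let X_N = {x : ∃ ũ with C_c ũ ≤ T x + c_c} be the feasibility region. Then for every x ∈ X_N the program has a unique minimizer ũ*(x), and the map x ↦ ũ*(x) is a continuous piecewise affine function on X_N: there exist finitely many polyhedra R_1, …, R_{n_r} with pairwise disjoint interiors whose union is X_N, matrices K_i and vectors g_i, such that ũ*(x) = K_i x + g_i for all x ∈ R_i. -/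
open Finset Matrix

/-- The affine map `x ↦ W x + b`. -/
def affineMapVec {m n : ℕ} (W : Matrix (Fin m) (Fin n) ℝ) (b : Fin m → ℝ)
    (x : Fin n → ℝ) : Fin m → ℝ :=
  fun i => (∑ j, W i j * x j) + b i

/-- Componentwise rectifier (ReLU). -/
def reluVec {n : ℕ} (v : Fin n → ℝ) : Fin n → ℝ := fun i => max 0 (v i)

/-- Parameters θ of a feed-forward ReLU network with `L ≥ 1` hidden layers of width `M`,
input dimension `nx` and output dimension `nu`:  the first hidden layer `(W1, b1)`,
the `L - 1` remaining hidden layers `(W l, b l)`, and the output layer `(Wout, bout)`. -/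
structure ReLUNetParams (nx nu M L : ℕ) where
  W1 : Matrix (Fin M) (Fin nx) ℝ
  b1 : Fin M → ℝ
  W : Fin (L - 1) → Matrix (Fin M) (Fin M) ℝ
  b : Fin (L - 1) → Fin M → ℝ
  Wout : Matrix (Fin nu) (Fin M) ℝ
  bout : Fin nu → ℝ

/-- The function `N(·; θ, M, L) = f_{L+1} ∘ g_L ∘ f_L ∘ ⋯ ∘ g_1 ∘ f_1` computed by the
ReLU network with parameters `θ`. -/
def ReLUNetParams.eval {nx nu M L : ℕ} (p : ReLUNetParams nx nu M L)
    (x : Fin nx → ℝ) : Fin nu → ℝ :=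
  affineMapVec p.Wout p.bout <|
    (List.finRange (L - 1)).foldl
      (fun ξ l => reluVec (affineMapVec (p.W l) (p.b l) ξ))
      (reluVec (affineMapVec p.W1 p.b1 x))

/-- A polyhedron `{x | Z x ≤ z}`. -/
def IsPolyhedron {n : ℕ} (S : Set (Fin n → ℝ)) : Prop :=
  ∃ (m : ℕ) (Z : Matrix (Fin m) (Fin n) ℝ) (z : Fin m → ℝ),
    S = {x | ∀ i, (∑ j, Z i j * x j) ≤ z i}

/-- `f` is piecewise affine on `D`: finitely many polyhedra with pairwise disjoint
interiors whose union is `D`, with `f` affine on each. -/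
def IsPWAOn {n m : ℕ} (D : Set (Fin n → ℝ)) (f : (Fin n → ℝ) → Fin m → ℝ) : Prop :=
  ∃ (r : ℕ) (R : Fin r → Set (Fin n → ℝ))
    (K : Fin r → Matrix (Fin m) (Fin n) ℝ) (g : Fin r → Fin m → ℝ),
    (∀ i, IsPolyhedron (R i)) ∧
    (∀ i j, i ≠ j → interior (R i) ∩ interior (R j) = ∅) ∧
    (⋃ i, R i) = D ∧
    (∀ i, ∀ x ∈ R i, f x = affineMapVec (K i) (g i) x)

/-- Scalar-valued piecewise affine function on `D`. -/
def IsPWAOnScalar {n : ℕ} (D : Set (Fin n → ℝ)) (f : (Fin n → ℝ) → ℝ) : Prop :=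
  ∃ (r : ℕ) (R : Fin r → Set (Fin n → ℝ)) (a : Fin r → Fin n → ℝ) (c : Fin r → ℝ),
    (∀ i, IsPolyhedron (R i)) ∧
    (∀ i j, i ≠ j → interior (R i) ∩ interior (R j) = ∅) ∧
    (⋃ i, R i) = D ∧
    (∀ i, ∀ x ∈ R i, f x = (∑ j, a i j * x j) + c i)

/-- `f` agrees with some affine function on the set `S`. -/
def AffineOnSet {n m : ℕ} (f : (Fin n → ℝ) → Fin m → ℝ) (S : Set (Fin n → ℝ)) : Prop :=
  ∃ (A : Matrix (Fin m) (Fin n) ℝ) (b : Fin m → ℝ), ∀ x ∈ S, f x = affineMapVec A b x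

/-- A linear region of `f`: a nonempty open connected set on which `f` is affine,
maximal with this property. -/
def IsLinearRegion {n m : ℕ} (f : (Fin n → ℝ) → Fin m → ℝ) (S : Set (Fin n → ℝ)) : Prop :=
  S.Nonempty ∧ IsOpen S ∧ IsConnected S ∧ AffineOnSet f S ∧
    ∀ S', IsOpen S' → IsConnected S' → S ⊂ S' → ¬ AffineOnSet f S'

/-- Maximum of a nonempty finite family of reals. -/
noncomputable def finMax {N : ℕ} (hN : 0 < N) (g : Fin N → ℝ) : ℝ :=
  Finset.univ.sup' (Finset.univ_nonempty_iff.mpr (Fin.pos_iff_nonempty.mp hN)) g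

/-- The unit hypercube `[0,1]^n`. -/
def unitCube (n : ℕ) : Set (Fin n → ℝ) := {x | ∀ i, 0 ≤ x i ∧ x i ≤ 1}



/-- Farkas' lemma, by induction on the constraint set. -/
lemma farkas_aux {m : ℕ} {ι : Type*} [DecidableEq ι] (s : Finset ι) :
    ∀ (a : ι → (Fin m → ℝ)) (g : Fin m → ℝ),
    (∀ d : Fin m → ℝ, (∀ i ∈ s, a i ⬝ᵥ d ≤ 0) → 0 ≤ g ⬝ᵥ d) →
    ∃ lam : ι → ℝ, (∀ i, 0 ≤ lam i) ∧ (∀ i ∉ s, lam i = 0) ∧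
      -g = ∑ i ∈ s, lam i • a i := by
  classical
  induction s using Finset.induction_on with
  | empty =>
    intro a g h
    have h0 := h (-g) (by simp)
    have : g ⬝ᵥ (-g) = -(g ⬝ᵥ g) := by simp
    rw [this] at h0
    have hg : g ⬝ᵥ g = 0 :=
      le_antisymm (by linarith) (Finset.sum_nonneg fun j _ => mul_self_nonneg (g j))
    have : g = 0 := dotProduct_self_eq_zero.mp hg
    exact ⟨fun _ => 0, fun _ => le_refl 0, fun _ _ => rfl, by simp [this]⟩
  | @insert k s hk ih =>
    intro a g h
    by_cases hcase : ∀ d : Fin m → ℝ, (∀ i ∈ s, a i ⬝ᵥ d ≤ 0) → 0 ≤ g ⬝ᵥ d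
    · obtain ⟨lam, h1, h2, h3⟩ := ih a g hcase
      refine ⟨lam, h1, fun i hi => h2 i (fun hmem => hi (Finset.mem_insert_of_mem hmem)), ?_⟩
      rw [Finset.sum_insert hk, h2 k hk, h3]
      simp
    · push_neg at hcase
      obtain ⟨d₀, hd₀s, hd₀g⟩ := hcase
      have hak : 0 < a k ⬝ᵥ d₀ := by
        by_contra hle
        push_neg at hle
        have := h d₀ (fun i hi => by
          rcases Finset.mem_insert.mp hi with rfl | hi
          · exact hle
          · exact hd₀s i hi)
        linarith
      set α : ℝ := a k ⬝ᵥ d₀ with hα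
      set g' : Fin m → ℝ := g - (g ⬝ᵥ d₀ / α) • a k with hg'
      set a' : ι → (Fin m → ℝ) := fun i => a i - (a i ⬝ᵥ d₀ / α) • a k with ha'
      have hstep : ∀ d : Fin m → ℝ, (∀ i ∈ s, a' i ⬝ᵥ d ≤ 0) → 0 ≤ g' ⬝ᵥ d := by
        intro d hd
        set d' : Fin m → ℝ := d - (a k ⬝ᵥ d / α) • d₀ with hd'
        have hkd' : a k ⬝ᵥ d' = 0 := by
          rw [hd', dotProduct_sub, dotProduct_smul, smul_eq_mul, ← hα]
          field_simp; ring
        have hid' : ∀ i ∈ s, a i ⬝ᵥ d' = a' i ⬝ᵥ d := by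
          intro i hi
          rw [hd', dotProduct_sub, dotProduct_smul, smul_eq_mul,
            ha']
          simp only [sub_dotProduct, smul_dotProduct, smul_eq_mul]
          field_simp
        have hgd' : g ⬝ᵥ d' = g' ⬝ᵥ d := by
          rw [hd', dotProduct_sub, dotProduct_smul, smul_eq_mul, hg']
          simp only [sub_dotProduct, smul_dotProduct, smul_eq_mul]
          field_simp
        have := h d' (fun i hi => by
          rcases Finset.mem_insert.mp hi with rfl | hi
          · exact le_of_eq hkd'
          · rw [hid' i hi]; exact hd i hi)
        rw [hgd'] at this
        exact this
      obtain ⟨mu, hmu1, hmu2, hmu3⟩ := ih a' g' hstep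
      set lk : ℝ := (-(g ⬝ᵥ d₀) - ∑ i ∈ s, mu i * (a i ⬝ᵥ d₀)) / α with hlk
      have hlknn : 0 ≤ lk := by
        apply div_nonneg _ hak.le
        have hsum : ∑ i ∈ s, mu i * (a i ⬝ᵥ d₀) ≤ 0 :=
          Finset.sum_nonpos fun i hi => mul_nonpos_of_nonneg_of_nonpos (hmu1 i) (hd₀s i hi)
        linarith
      refine ⟨fun i => if i = k then lk else mu i, ?_, ?_, ?_⟩
      · intro i
        by_cases hik : i = k
        · simp only [if_pos hik]; exact hlknn
        · simp only [if_neg hik]; exact hmu1 i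
      · intro i hi
        have hik : i ≠ k := fun h' => hi (h' ▸ Finset.mem_insert_self k s)
        simp only [if_neg hik]
        exact hmu2 i (fun hmem => hi (Finset.mem_insert_of_mem hmem))
      · have hGg : -g = -g' - (g ⬝ᵥ d₀ / α) • a k := by rw [hg']; abel
        have hexp : ∑ i ∈ s, mu i • a' i
            = ∑ i ∈ s, mu i • a i - (∑ i ∈ s, mu i * (a i ⬝ᵥ d₀) / α) • a k := by
          have e1 : ∀ i ∈ s, mu i • a' i
              = mu i • a i - (mu i * (a i ⬝ᵥ d₀) / α) • a k := by
            intro i _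
            simp only [ha']
            rw [smul_sub, smul_smul, mul_div_assoc]
          rw [Finset.sum_congr rfl e1, Finset.sum_sub_distrib, Finset.sum_smul]
        have hlkeq : lk = -(g ⬝ᵥ d₀ / α) - ∑ i ∈ s, mu i * (a i ⬝ᵥ d₀) / α := by
          rw [hlk, ← Finset.sum_div]; ring
        have hmain : -g = lk • a k + ∑ i ∈ s, mu i • a i := by
          have h1 : -g = (∑ i ∈ s, mu i • a i
              - (∑ i ∈ s, mu i * (a i ⬝ᵥ d₀) / α) • a k) - (g ⬝ᵥ d₀ / α) • a k := by
            rw [hGg, hmu3, hexp]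
          rw [h1, hlkeq]
          module
        have hrest : ∑ i ∈ s, (if i = k then lk else mu i) • a i = ∑ i ∈ s, mu i • a i :=
          Finset.sum_congr rfl fun i hi => by
            rw [if_neg (fun h' : i = k => hk (h' ▸ hi))]
        rw [Finset.sum_insert hk]
        simp only [if_pos rfl]
        rw [hrest]
        exact hmain


/-- Conic Carathéodory: a nonnegative combination can be rewritten with "independent" support. -/
lemma caratheodory_cone {m : ℕ} {ι : Type*} [DecidableEq ι] (a : ι → (Fin m → ℝ))
    (s : Finset ι) :
    ∀ (y : Fin m → ℝ) (lam : ι → ℝ), (∀ i, 0 ≤ lam i) → (∀ i ∉ s, lam i = 0) →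
    y = ∑ i ∈ s, lam i • a i →
    ∃ (B : Finset ι) (mu : ι → ℝ), B ⊆ s ∧ (∀ i, 0 ≤ mu i) ∧ (∀ i ∉ B, mu i = 0) ∧
      y = ∑ i ∈ B, mu i • a i ∧
      (∀ c : ι → ℝ, (∀ i ∉ B, c i = 0) → ∑ i ∈ B, c i • a i = 0 → ∀ i, c i = 0) := by
  classical
  induction s using Finset.strongInduction with
  | _ s ih =>
    intro y lam hnn hsupp hy
    set t : Finset ι := s.filter (fun i => lam i ≠ 0) with ht
    have htsub : t ⊆ s := Finset.filter_subset _ _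
    have hyt : y = ∑ i ∈ t, lam i • a i := by
      rw [hy]
      symm
      apply Finset.sum_subset htsub
      intro i hi hit
      have : lam i = 0 := by
        by_contra hne
        exact hit (Finset.mem_filter.mpr ⟨hi, hne⟩)
      rw [this, zero_smul]
    by_cases hP : ∀ c : ι → ℝ, (∀ i ∉ t, c i = 0) → ∑ i ∈ t, c i • a i = 0 → ∀ i, c i = 0
    · refine ⟨t, fun i => if i ∈ t then lam i else 0, htsub, ?_, ?_, ?_, ?_⟩
      · intro i; by_cases h : i ∈ t <;> simp [h, hnn i]
      · intro i hi; simp only [if_neg hi]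
      · rw [hyt]; apply Finset.sum_congr rfl; intro i hi; simp only [if_pos hi]
      · exact hP
    · push_neg at hP
      obtain ⟨c₀, hc₀supp, hc₀sum, j, hc₀j⟩ := hP
      have hjt : j ∈ t := by
        by_contra hjn
        exact hc₀j (hc₀supp j hjn)
      obtain ⟨c, hcsupp, hcsum, hcjpos⟩ :
          ∃ c : ι → ℝ, (∀ i ∉ t, c i = 0) ∧ (∑ i ∈ t, c i • a i = 0) ∧ ∃ j ∈ t, 0 < c j := by
        rcases lt_or_gt_of_ne hc₀j with hneg | hpos
        · refine ⟨-c₀, fun i hi => by simp [hc₀supp i hi], by simp [hc₀sum], j, hjt, by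
            simpa using hneg⟩
        · exact ⟨c₀, hc₀supp, hc₀sum, j, hjt, hpos⟩
      obtain ⟨j₀, hj₀t, hj₀pos⟩ := hcjpos
      set tpos : Finset ι := t.filter (fun i => 0 < c i) with htpos
      have htposne : tpos.Nonempty := ⟨j₀, Finset.mem_filter.mpr ⟨hj₀t, hj₀pos⟩⟩
      obtain ⟨i₀, hi₀mem, hi₀min⟩ := Finset.exists_min_image tpos (fun i => lam i / c i) htposne
      have hi₀t : i₀ ∈ t := (Finset.mem_filter.mp hi₀mem).1
      have hi₀pos : 0 < c i₀ := (Finset.mem_filter.mp hi₀mem).2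
      set θ : ℝ := lam i₀ / c i₀ with hθ
      have hθnn : 0 ≤ θ := div_nonneg (hnn i₀) hi₀pos.le
      have hlam' : ∀ i ∈ t, 0 ≤ lam i - θ * c i := by
        intro i hit
        by_cases hci : 0 < c i
        · have := hi₀min i (Finset.mem_filter.mpr ⟨hit, hci⟩)
          have h2 : θ * c i ≤ lam i := by
            rw [← le_div_iff₀ hci]
            exact this
          linarith
        · push_neg at hci
          have : θ * c i ≤ 0 := mul_nonpos_of_nonneg_of_nonpos hθnn hci
          linarith [hnn i]
      have hzero : lam i₀ - θ * c i₀ = 0 := by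
        rw [hθ]; field_simp; ring
      set t' : Finset ι := t.erase i₀ with ht'
      have ht'sub : t' ⊆ s := (Finset.erase_subset _ _).trans htsub
      have ht'ss : t' ⊂ s := by
        rw [Finset.ssubset_iff_of_subset ht'sub]
        exact ⟨i₀, htsub hi₀t, Finset.notMem_erase _ _⟩
      set lam'' : ι → ℝ := fun i => if i ∈ t' then lam i - θ * c i else 0 with hlam''
      have h1 : ∀ i, 0 ≤ lam'' i := by
        intro i
        by_cases h : i ∈ t'
        · simp only [hlam'', if_pos h]
          exact hlam' i (Finset.mem_of_mem_erase h)
        · simp only [hlam'', if_neg h]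
          exact le_rfl
      have h2 : ∀ i ∉ t', lam'' i = 0 := fun i hi => by simp only [hlam'', if_neg hi]
      have h3 : y = ∑ i ∈ t', lam'' i • a i := by
        have e1 : ∑ i ∈ t', lam'' i • a i = ∑ i ∈ t', (lam i - θ * c i) • a i :=
          Finset.sum_congr rfl fun i hi => by rw [hlam'']; simp only [if_pos hi]
        have e2 : ∑ i ∈ t, (lam i - θ * c i) • a i
            = (lam i₀ - θ * c i₀) • a i₀ + ∑ i ∈ t', (lam i - θ * c i) • a i := by
          rw [ht']
          exact (Finset.add_sum_erase t _ hi₀t).symm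
        have e3 : ∑ i ∈ t, (lam i - θ * c i) • a i = y := by
          have : ∀ i ∈ t, (lam i - θ * c i) • a i = lam i • a i - θ • (c i • a i) := by
            intro i _
            rw [sub_smul, smul_smul]
          rw [Finset.sum_congr rfl this, Finset.sum_sub_distrib, ← Finset.smul_sum, hcsum,
            smul_zero, sub_zero, ← hyt]
        rw [e1]
        have e4 : y = (lam i₀ - θ * c i₀) • a i₀ + ∑ i ∈ t', (lam i - θ * c i) • a i := by
          rw [← e2, e3]
        rw [hzero, zero_smul, zero_add] at e4
        exact e4
      obtain ⟨B, mu, hBsub, hmu⟩ := ih t' ht'ss y lam'' h1 h2 h3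
      exact ⟨B, mu, hBsub.trans ht'sub, hmu⟩

/-- representation of a linear map into a Pi type by a matrix -/
lemma linmap_repr {n : ℕ} {α : Type*} [Fintype α] (f : (Fin n → ℝ) →ₗ[ℝ] (α → ℝ))
    (x : Fin n → ℝ) (i : α) : f x i = ∑ j, f (Pi.single j (1:ℝ)) i * x j := by
  have hx : x = ∑ j, x j • (Pi.single j 1 : Fin n → ℝ) := by
    conv_lhs => rw [← Finset.univ_sum_single x]
    exact Finset.sum_congr rfl fun j _ => by rw [← Pi.single_smul, smul_eq_mul, mul_one]
  have hfx : f x = ∑ j, x j • f (Pi.single j (1:ℝ)) := by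
    conv_lhs => rw [hx]
    rw [map_sum]
    exact Finset.sum_congr rfl fun j _ => f.map_smul (x j) _
  rw [hfx, Finset.sum_apply]
  exact Finset.sum_congr rfl fun j _ => by rw [Pi.smul_apply, smul_eq_mul]; ring

lemma dotProduct_finset_sum {m : ℕ} {α : Type*} (s : Finset α) (u : Fin m → ℝ)
    (f : α → Fin m → ℝ) : u ⬝ᵥ (∑ i ∈ s, f i) = ∑ i ∈ s, u ⬝ᵥ (f i) := by
  calc u ⬝ᵥ (∑ i ∈ s, f i) = ∑ j, u j * ∑ i ∈ s, f i j := by simp [dotProduct]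
    _ = ∑ j, ∑ i ∈ s, u j * f i j := by simp [Finset.mul_sum]
    _ = ∑ i ∈ s, ∑ j, u j * f i j := Finset.sum_comm
    _ = ∑ i ∈ s, u ⬝ᵥ f i := rfl


section
variable {nx m q : ℕ} (F : Matrix (Fin m) (Fin m) ℝ) (G : Matrix (Fin nx) (Fin m) ℝ)
  (Cc : Matrix (Fin q) (Fin m) ℝ) (T : Matrix (Fin q) (Fin nx) ℝ) (cc : Fin q → ℝ)

/-- objective -/
def qpJ (x : Fin nx → ℝ) (u : Fin m → ℝ) : ℝ := u ⬝ᵥ (F *ᵥ u) + x ⬝ᵥ (G *ᵥ u)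

/-- gradient -/
def qpGrad (x : Fin nx → ℝ) (u : Fin m → ℝ) : Fin m → ℝ := (2:ℝ) • (F *ᵥ u) + Gᵀ *ᵥ x

lemma dot_symm (hsym : Fᵀ = F) (d u : Fin m → ℝ) : d ⬝ᵥ (F *ᵥ u) = u ⬝ᵥ (F *ᵥ d) := by
  rw [dotProduct_mulVec, ← Matrix.mulVec_transpose, hsym, dotProduct_comm]

lemma qpJ_expand (hsym : Fᵀ = F) (x : Fin nx → ℝ) (u v : Fin m → ℝ) :
    qpJ F G x v = qpJ F G x u + qpGrad F G x u ⬝ᵥ (v - u) + (v - u) ⬝ᵥ (F *ᵥ (v - u)) := by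
  have h1 : v = u + (v - u) := by ring
  set d := v - u with hd
  rw [qpJ, qpJ, qpGrad, h1]
  rw [Matrix.mulVec_add, Matrix.mulVec_add]
  rw [add_dotProduct, dotProduct_add, dotProduct_add, dotProduct_add]
  rw [add_dotProduct, smul_dotProduct]
  rw [dot_symm F hsym d u, Matrix.dotProduct_mulVec x G d, ← Matrix.mulVec_transpose]
  rw [dotProduct_comm (F *ᵥ u) d, dot_symm F hsym d u, smul_eq_mul]
  ring

lemma sq_le_dot_self (u : Fin m → ℝ) (i : Fin m) : u i * u i ≤ u ⬝ᵥ u := by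
  unfold dotProduct
  exact Finset.single_le_sum (f := fun j => u j * u j)
    (fun j _ => mul_self_nonneg (u j)) (Finset.mem_univ i)

lemma posdef_coercive (hF : F.PosDef) : ∃ c > 0, ∀ u : Fin m → ℝ, c * (u ⬝ᵥ u) ≤ u ⬝ᵥ (F *ᵥ u) := by
  rcases Nat.eq_zero_or_pos m with hm | hm
  · refine ⟨1, one_pos, fun u => ?_⟩
    subst hm
    simp [dotProduct]
  · set S : Set (Fin m → ℝ) := {u | u ⬝ᵥ u = 1} with hS
    have hne : S.Nonempty := by
      refine ⟨Pi.single ⟨0, hm⟩ 1, ?_⟩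
      simp [hS, dotProduct, Pi.single_apply]
    have hdotc : Continuous fun u : Fin m → ℝ => u ⬝ᵥ u := by
      unfold dotProduct
      exact continuous_finset_sum _ fun j _ => (continuous_apply j).mul (continuous_apply j)
    have hquadc : Continuous fun u : Fin m → ℝ => u ⬝ᵥ (F *ᵥ u) := by
      unfold dotProduct Matrix.mulVec
      exact continuous_finset_sum _ fun j _ => (continuous_apply j).mul
        (continuous_finset_sum _ fun k _ => (continuous_const.mul (continuous_apply k)))
    have hclosed : IsClosed S := isClosed_eq hdotc continuous_const
    have hsub : S ⊆ Metric.closedBall 0 1 := by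
      intro u hu
      rw [Metric.mem_closedBall, dist_zero_right]
      refine (pi_norm_le_iff_of_nonneg zero_le_one).2 fun i => ?_
      rw [Real.norm_eq_abs, abs_le_one_iff_mul_self_le_one]
      calc u i * u i ≤ u ⬝ᵥ u := sq_le_dot_self u i
        _ = 1 := hu
    have hK : IsCompact S := (isCompact_closedBall (0:Fin m → ℝ) 1).of_isClosed_subset hclosed hsub
    obtain ⟨w, hwS, hwmin⟩ := hK.exists_isMinOn hne hquadc.continuousOn
    have hw0 : w ≠ 0 := by
      intro h
      rw [h] at hwS
      simp [hS, dotProduct] at hwS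
    have hc : 0 < w ⬝ᵥ (F *ᵥ w) := by
      have := hF.dotProduct_mulVec_pos hw0
      simpa using this
    refine ⟨w ⬝ᵥ (F *ᵥ w), hc, fun u => ?_⟩
    rcases eq_or_ne u 0 with h | h
    · simp [h]
    · have ht : 0 < u ⬝ᵥ u :=
        lt_of_le_of_ne (Finset.sum_nonneg fun j _ => mul_self_nonneg (u j))
          (fun h' => h (dotProduct_self_eq_zero.mp h'.symm))
      set t := u ⬝ᵥ u with htdef
      set s : ℝ := (Real.sqrt t)⁻¹ with hsdef
      have hsq : s * s * t = 1 := by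
        rw [hsdef, ← mul_inv]
        rw [Real.mul_self_sqrt ht.le]
        field_simp
      have hmem : s • u ∈ S := by
        simp only [hS, Set.mem_setOf_eq, smul_dotProduct, dotProduct_smul, smul_eq_mul]
        rw [← htdef]; nlinarith [hsq]
      have := hwmin hmem
      simp only [Set.mem_setOf_eq] at this
      have hexp : (s • u) ⬝ᵥ (F *ᵥ (s • u)) = s * s * (u ⬝ᵥ (F *ᵥ u)) := by
        rw [Matrix.mulVec_smul, smul_dotProduct, dotProduct_smul]
        simp [mul_assoc]
      rw [hexp] at this
      have hs2 : s * s = t⁻¹ := by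
        field_simp at hsq ⊢
        nlinarith [hsq]
      rw [hs2] at this
      calc w ⬝ᵥ (F *ᵥ w) * t ≤ (t⁻¹ * (u ⬝ᵥ (F *ᵥ u))) * t := by
            apply mul_le_mul_of_nonneg_right this ht.le
        _ = u ⬝ᵥ (F *ᵥ u) := by field_simp

/-- feasible set -/
def qpFeas (x : Fin nx → ℝ) : Set (Fin m → ℝ) := {u | ∀ i, (Cc *ᵥ u) i ≤ (T *ᵥ x) i + cc i}

lemma qpJ_continuous (x : Fin nx → ℝ) : Continuous (qpJ F G x) := by
  unfold qpJ dotProduct Matrix.mulVec dotProduct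
  apply Continuous.add
  · exact continuous_finset_sum _ fun j _ => (continuous_apply j).mul
      (continuous_finset_sum _ fun k _ => (continuous_const.mul (continuous_apply k)))
  · exact continuous_finset_sum _ fun j _ => continuous_const.mul
      (continuous_finset_sum _ fun k _ => (continuous_const.mul (continuous_apply k)))

lemma qpFeas_closed (x : Fin nx → ℝ) : IsClosed (qpFeas Cc T cc x) := by
  have : qpFeas Cc T cc x = ⋂ i, {u : Fin m → ℝ | (Cc *ᵥ u) i ≤ (T *ᵥ x) i + cc i} := by
    ext u; simp [qpFeas, Set.mem_iInter]
  rw [this]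
  refine isClosed_iInter fun i => isClosed_le ?_ continuous_const
  unfold Matrix.mulVec dotProduct
  exact continuous_finset_sum _ fun k _ => (continuous_const.mul (continuous_apply k))

lemma qp_exists_min (hF : F.PosDef) (x : Fin nx → ℝ) (hx : (qpFeas Cc T cc x).Nonempty) :
    ∃ ustar ∈ qpFeas Cc T cc x, IsMinOn (qpJ F G x) (qpFeas Cc T cc x) ustar := by
  obtain ⟨c, hc, hcoer⟩ := posdef_coercive F hF
  obtain ⟨u₀, hu₀⟩ := hx
  set w : Fin m → ℝ := Gᵀ *ᵥ x with hw
  set W : ℝ := w ⬝ᵥ w with hW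
  have hWnn : 0 ≤ W := Finset.sum_nonneg fun j _ => mul_self_nonneg (w j)
  set Jm : ℝ := qpJ F G x u₀ with hJm
  set R : ℝ := (2 * |Jm| + W / c) / c + 1 with hR
  have hR1 : 1 ≤ R := by
    rw [hR]
    have : 0 ≤ (2 * |Jm| + W / c) / c := by positivity
    linarith
  set K : Set (Fin m → ℝ) := qpFeas Cc T cc x ∩ {u | qpJ F G x u ≤ Jm} with hK
  have hcross : ∀ u : Fin m → ℝ, x ⬝ᵥ (G *ᵥ u) = w ⬝ᵥ u := by
    intro u
    rw [hw, Matrix.dotProduct_mulVec x G u, ← Matrix.mulVec_transpose]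
  have hbound : ∀ u ∈ K, u ⬝ᵥ u ≤ R := by
    intro u hu
    obtain ⟨hufeas, huJ⟩ := hu
    set s : ℝ := u ⬝ᵥ u with hs
    have hsnn : 0 ≤ s := Finset.sum_nonneg fun j _ => mul_self_nonneg (u j)
    by_contra hcon
    push_neg at hcon
    have hs1 : 1 < s := lt_of_le_of_lt hR1 hcon
    have hJu : qpJ F G x u = u ⬝ᵥ (F *ᵥ u) + w ⬝ᵥ u := by rw [qpJ, hcross]
    have h1 : c * s ≤ Jm - w ⬝ᵥ u := by
      have := hcoer u
      rw [Set.mem_setOf_eq, hJu] at huJ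
      linarith
    have h2 : (w ⬝ᵥ u) * (w ⬝ᵥ u) ≤ W * s := by
      have hCS := Finset.sum_mul_sq_le_sq_mul_sq Finset.univ w u
      have e1 : (∑ i, w i * u i) ^ 2 = (w ⬝ᵥ u) * (w ⬝ᵥ u) := by rw [dotProduct]; ring
      have e2 : (∑ i, w i ^ 2) = W := by rw [hW, dotProduct]; exact Finset.sum_congr rfl fun i _ => pow_two _
      have e3 : (∑ i, u i ^ 2) = s := by rw [hs, dotProduct]; exact Finset.sum_congr rfl fun i _ => pow_two _
      rw [e1, e2, e3] at hCS
      exact hCS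
    have habs : Jm ≤ |Jm| := le_abs_self Jm
    have habs' : -|Jm| ≤ Jm := neg_abs_le Jm
    have habs0 : 0 ≤ |Jm| := abs_nonneg Jm
    set t : ℝ := w ⬝ᵥ u with htd
    set P : ℝ := W / c with hPd
    have hPc : P * c = W := div_mul_cancel₀ W (ne_of_gt hc)
    have hPnn : 0 ≤ P := div_nonneg hWnn hc.le
    set y : ℝ := c * s with hyd
    have hy : 2 * |Jm| + P + c < y := by
      have := mul_lt_mul_of_pos_left hcon hc
      rw [hR] at this
      have hcR : c * ((2 * |Jm| + W / c) / c + 1) = 2 * |Jm| + W / c + c := by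
        field_simp
      rw [hcR] at this
      exact this
    have hypos : 0 < y := by positivity
    have hyabs : |Jm| ≤ y := by linarith
    have ht1 : t ≤ Jm - y := by linarith
    have ht2 : (y - |Jm|) * (y - |Jm|) ≤ t * t := by nlinarith
    have ht3 : t * t ≤ P * y := by
      calc t * t ≤ W * s := h2
        _ = P * y := by rw [← hPc, hyd]; ring
    have hkey : (2 * |Jm| + P) * y < (y - c) * y :=
      mul_lt_mul_of_pos_right (by linarith) hypos
    nlinarith
  have hKclosed : IsClosed K :=
    (qpFeas_closed Cc T cc x).inter (isClosed_le (qpJ_continuous F G x) continuous_const)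
  have hKsub : K ⊆ Metric.closedBall 0 (Real.sqrt R) := by
    intro u hu
    rw [Metric.mem_closedBall, dist_zero_right]
    refine (pi_norm_le_iff_of_nonneg (Real.sqrt_nonneg R)).2 fun i => ?_
    rw [Real.norm_eq_abs]
    refine Real.abs_le_sqrt ?_
    calc u i ^ 2 = u i * u i := sq (u i) ▸ by ring
      _ ≤ u ⬝ᵥ u := sq_le_dot_self u i
      _ ≤ R := hbound u hu
  have hKcpt : IsCompact K :=
    (isCompact_closedBall (0 : Fin m → ℝ) _).of_isClosed_subset hKclosed hKsub
  have hKne : K.Nonempty := ⟨u₀, hu₀, hJm.ge⟩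
  obtain ⟨us, husK, husmin⟩ := hKcpt.exists_isMinOn hKne (qpJ_continuous F G x).continuousOn
  refine ⟨us, husK.1, fun u hu => ?_⟩
  by_cases hcase : qpJ F G x u ≤ Jm
  · exact husmin (Set.mem_inter hu hcase)
  · push_neg at hcase
    calc qpJ F G x us ≤ qpJ F G x u₀ := husmin ⟨hu₀, hJm.ge⟩
      _ ≤ qpJ F G x u := le_of_lt hcase

lemma qp_min_strict (hF : F.PosDef) (x : Fin nx → ℝ) (ustar : Fin m → ℝ)
    (hmin : IsMinOn (qpJ F G x) (qpFeas Cc T cc x) ustar)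
    (hmem : ustar ∈ qpFeas Cc T cc x) :
    ∀ u ∈ qpFeas Cc T cc x, u ≠ ustar → qpJ F G x ustar < qpJ F G x u := by
  intro u hu hne
  have hsym : Fᵀ = F := by
    have := hF.1
    simpa [Matrix.IsHermitian] using this
  set d : Fin m → ℝ := u - ustar with hd
  have hd0 : d ≠ 0 := sub_ne_zero.mpr hne
  have hQ : 0 < d ⬝ᵥ (F *ᵥ d) := by
    have := hF.dotProduct_mulVec_pos hd0
    simpa using this
  set w : Fin m → ℝ := ustar + (1/2 : ℝ) • d with hwdef
  have hwfeas : w ∈ qpFeas Cc T cc x := by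
    intro i
    have h1 := hmem i
    have h2 := hu i
    have e : (Cc *ᵥ w) i = (Cc *ᵥ ustar) i + (1/2 : ℝ) * ((Cc *ᵥ u) i - (Cc *ᵥ ustar) i) := by
      rw [hwdef, Matrix.mulVec_add, Matrix.mulVec_smul, hd, Matrix.mulVec_sub]
      simp [Pi.smul_apply]
      try ring
    rw [e]; linarith
  have hJw := qpJ_expand F G hsym x ustar w
  have hJu := qpJ_expand F G hsym x ustar u
  have hwd : w - ustar = (1/2 : ℝ) • d := by rw [hwdef]; abel
  rw [hwd] at hJw
  have hud : u - ustar = d := by rw [hd]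
  rw [hud] at hJu
  have e1 : qpGrad F G x ustar ⬝ᵥ ((1/2 : ℝ) • d) = (1/2) * (qpGrad F G x ustar ⬝ᵥ d) := by
    rw [dotProduct_smul]; simp
  have e2 : ((1/2 : ℝ) • d) ⬝ᵥ (F *ᵥ ((1/2 : ℝ) • d)) = (1/4) * (d ⬝ᵥ (F *ᵥ d)) := by
    rw [Matrix.mulVec_smul, smul_dotProduct, dotProduct_smul]
    simp; ring
  rw [e1, e2] at hJw
  have hminw := hmin hwfeas
  simp only [Set.mem_setOf_eq] at hminw
  linarith

lemma qp_vi (hF : F.PosDef) (x : Fin nx → ℝ) (ustar : Fin m → ℝ)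
    (hmin : IsMinOn (qpJ F G x) (qpFeas Cc T cc x) ustar)
    (hmem : ustar ∈ qpFeas Cc T cc x) :
    ∀ v ∈ qpFeas Cc T cc x, 0 ≤ qpGrad F G x ustar ⬝ᵥ (v - ustar) := by
  intro v hv
  have hsym : Fᵀ = F := by
    have := hF.1
    simpa [Matrix.IsHermitian] using this
  set d : Fin m → ℝ := v - ustar with hd
  set gd : ℝ := qpGrad F G x ustar ⬝ᵥ d with hgd
  set Q : ℝ := d ⬝ᵥ (F *ᵥ d) with hQd
  have hQ : 0 ≤ Q := by
    have := hF.posSemidef.dotProduct_mulVec_nonneg d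
    simpa using this
  by_contra hcon
  push_neg at hcon
  set tt : ℝ := min 1 (-gd / (Q + 1)) with htt
  have htpos : 0 < tt := by
    apply lt_min one_pos
    apply div_pos (by linarith) (by linarith)
  have ht1 : tt ≤ 1 := min_le_left _ _
  have ht2 : tt ≤ -gd / (Q + 1) := min_le_right _ _
  have hfeas : ustar + tt • d ∈ qpFeas Cc T cc x := by
    intro i
    have h1 := hmem i
    have h2 := hv i
    have e : (Cc *ᵥ (ustar + tt • d)) i
        = (Cc *ᵥ ustar) i + tt * ((Cc *ᵥ v) i - (Cc *ᵥ ustar) i) := by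
      rw [Matrix.mulVec_add, Matrix.mulVec_smul, hd, Matrix.mulVec_sub]
      simp [Pi.smul_apply]
      try ring
    rw [e]; nlinarith
  have hJt := qpJ_expand F G hsym x ustar (ustar + tt • d)
  have he : ustar + tt • d - ustar = tt • d := by abel
  rw [he] at hJt
  have e1 : qpGrad F G x ustar ⬝ᵥ (tt • d) = tt * gd := by rw [dotProduct_smul]; simp [hgd]
  have e2 : (tt • d) ⬝ᵥ (F *ᵥ (tt • d)) = tt * tt * Q := by
    rw [Matrix.mulVec_smul, smul_dotProduct, dotProduct_smul]
    simp [hQd]; ring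
  rw [e1, e2] at hJt
  have hminw := hmin hfeas
  simp only [Set.mem_setOf_eq] at hminw
  -- 0 ≤ tt*gd + tt*tt*Q, tt > 0 ⇒ 0 ≤ gd + tt*Q; but tt*Q ≤ -gd*Q/(Q+1) < -gd
  have hkey : tt * (Q + 1) ≤ -gd :=
    (le_div_iff₀ (by linarith : (0:ℝ) < Q + 1)).mp ht2
  nlinarith

lemma qp_cone_vi (hF : F.PosDef) (x : Fin nx → ℝ) (ustar : Fin m → ℝ)
    (hmin : IsMinOn (qpJ F G x) (qpFeas Cc T cc x) ustar)
    (hmem : ustar ∈ qpFeas Cc T cc x) :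
    ∀ d : Fin m → ℝ, (∀ i, (Cc *ᵥ ustar) i = (T *ᵥ x) i + cc i → (Cc *ᵥ d) i ≤ 0) →
      0 ≤ qpGrad F G x ustar ⬝ᵥ d := by
  intro d hda
  classical
  set b : Fin q → ℝ := fun i => (T *ᵥ x) i + cc i with hb
  set f : Fin q → ℝ := fun i =>
    if (Cc *ᵥ ustar) i = b i then 1 else (b i - (Cc *ᵥ ustar) i) / (|(Cc *ᵥ d) i| + 1) with hf
  set Sf : Finset ℝ := insert 1 (Finset.univ.image f) with hSf
  have hSne : Sf.Nonempty := ⟨1, Finset.mem_insert_self _ _⟩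
  set tt : ℝ := Sf.min' hSne with htt
  have htmem : tt ∈ Sf := Finset.min'_mem _ _
  have hbi : ∀ i, b i = (T *ᵥ x) i + cc i := fun i => rfl
  have hfpos : ∀ i, 0 < f i := by
    intro i
    by_cases hcase : (Cc *ᵥ ustar) i = b i
    · simp only [hf, if_pos hcase]; exact one_pos
    · simp only [hf, if_neg hcase]
      have : (Cc *ᵥ ustar) i < b i := lt_of_le_of_ne (hmem i) hcase
      apply div_pos (by linarith) (by positivity)
  have htpos : 0 < tt := by
    rcases Finset.mem_insert.mp htmem with h | h
    · rw [h]; exact one_pos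
    · obtain ⟨i, _, hi⟩ := Finset.mem_image.mp h
      rw [← hi]; exact hfpos i
  have ht1 : tt ≤ 1 := Finset.min'_le _ _ (Finset.mem_insert_self _ _)
  have htf : ∀ i, tt ≤ f i := fun i =>
    Finset.min'_le _ _ (Finset.mem_insert_of_mem (Finset.mem_image_of_mem f (Finset.mem_univ i)))
  have hfeas : ustar + tt • d ∈ qpFeas Cc T cc x := by
    intro i
    have e : (Cc *ᵥ (ustar + tt • d)) i = (Cc *ᵥ ustar) i + tt * (Cc *ᵥ d) i := by
      rw [Matrix.mulVec_add, Matrix.mulVec_smul]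
      simp [Pi.smul_apply]
    rw [e]
    by_cases hcase : (Cc *ᵥ ustar) i = b i
    · have := hda i hcase
      have : tt * (Cc *ᵥ d) i ≤ 0 := mul_nonpos_of_nonneg_of_nonpos htpos.le this
      have hmi := hmem i
      rw [← hbi i, ← hcase]
      linarith
    · have hgap : 0 < b i - (Cc *ᵥ ustar) i := by
        have : (Cc *ᵥ ustar) i < b i := lt_of_le_of_ne (hmem i) hcase
        linarith
      have habs : (Cc *ᵥ d) i ≤ |(Cc *ᵥ d) i| := le_abs_self _
      have hdenpos : (0:ℝ) < |(Cc *ᵥ d) i| + 1 := by positivity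
      have htfi := htf i
      simp only [hf, if_neg hcase] at htfi
      rw [← hbi i]
      -- tt * Cd ≤ tt * |Cd| ≤ f i * |Cd| = gap * |Cd|/(|Cd|+1) ≤ gap
      have h1 : tt * (Cc *ᵥ d) i ≤ tt * |(Cc *ᵥ d) i| :=
        mul_le_mul_of_nonneg_left habs htpos.le
      have h2 : tt * |(Cc *ᵥ d) i| ≤ (b i - (Cc *ᵥ ustar) i) / (|(Cc *ᵥ d) i| + 1) * |(Cc *ᵥ d) i| :=
        mul_le_mul_of_nonneg_right htfi (abs_nonneg _)
      have h3 : (b i - (Cc *ᵥ ustar) i) / (|(Cc *ᵥ d) i| + 1) * |(Cc *ᵥ d) i|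
          ≤ b i - (Cc *ᵥ ustar) i := by
        rw [div_mul_eq_mul_div, div_le_iff₀ hdenpos]
        nlinarith [abs_nonneg ((Cc *ᵥ d) i)]
      have hchain : tt * (Cc *ᵥ d) i ≤ b i - (Cc *ᵥ ustar) i := le_trans h1 (le_trans h2 h3)
      linarith
  have hvi := qp_vi F G Cc T cc hF x ustar hmin hmem (ustar + tt • d) hfeas
  have he : ustar + tt • d - ustar = tt • d := by abel
  rw [he, dotProduct_smul] at hvi
  simp only [smul_eq_mul] at hvi
  exact nonneg_of_mul_nonneg_right hvi htpos

/-- "independent rows" property of a constraint subset -/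
def qpIndep (B : Finset (Fin q)) : Prop :=
  ∀ c : Fin q → ℝ, (∀ i ∉ B, c i = 0) → ∑ i ∈ B, c i • (Cc i) = 0 → ∀ i, c i = 0

/-- the KKT linear operator for active set B -/
noncomputable def kktL (B : Finset (Fin q)) :
    ((Fin m → ℝ) × (B → ℝ)) →ₗ[ℝ] ((Fin m → ℝ) × (B → ℝ)) where
  toFun p := ((2:ℝ) • (F *ᵥ p.1) + ∑ i : B, p.2 i • (Cc i), fun i : B => (Cc i) ⬝ᵥ p.1)
  map_add' p r := by
    refine Prod.ext ?_ ?_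
    · show (2:ℝ) • (F *ᵥ (p.1 + r.1)) + ∑ i : B, (p.2 + r.2) i • (Cc i)
        = ((2:ℝ) • (F *ᵥ p.1) + ∑ i : B, p.2 i • (Cc i))
          + ((2:ℝ) • (F *ᵥ r.1) + ∑ i : B, r.2 i • (Cc i))
      have hsplit : ∑ i : B, (p.2 + r.2) i • (Cc i)
          = ∑ i : B, ((p.2 i • Cc i : Fin m → ℝ) + r.2 i • Cc i) :=
        Finset.sum_congr rfl fun i _ => by rw [Pi.add_apply, add_smul]
      rw [Matrix.mulVec_add, hsplit, Finset.sum_add_distrib, smul_add]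
      abel
    · show (fun i : B => (Cc i) ⬝ᵥ (p.1 + r.1))
        = fun i : B => ((Cc i) ⬝ᵥ p.1) + ((Cc i) ⬝ᵥ r.1)
      funext i
      rw [dotProduct_add]
  map_smul' t p := by
    refine Prod.ext ?_ ?_
    · show (2:ℝ) • (F *ᵥ (t • p.1)) + ∑ i : B, (t • p.2) i • (Cc i)
        = t • ((2:ℝ) • (F *ᵥ p.1) + ∑ i : B, p.2 i • (Cc i))
      rw [Matrix.mulVec_smul, smul_add, smul_comm t]
      congr 1
      rw [Finset.smul_sum]
      apply Finset.sum_congr rfl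
      intro i _
      rw [Pi.smul_apply, smul_eq_mul, ← smul_smul]
    · show (fun i : B => (Cc i) ⬝ᵥ (t • p.1)) = t • fun i : B => (Cc i) ⬝ᵥ p.1
      funext i
      simp [dotProduct_smul]

lemma kktL_inj (hF : F.PosDef) (B : Finset (Fin q)) (hB : qpIndep Cc B) :
    Function.Injective (kktL F Cc B) := by
  rw [← LinearMap.ker_eq_bot, LinearMap.ker_eq_bot']
  intro p hp
  obtain ⟨u, lam⟩ := p
  have h1 : (2:ℝ) • (F *ᵥ u) + ∑ i : B, lam i • (Cc i) = 0 := congrArg Prod.fst hp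
  have h2 : ∀ i : B, (Cc i) ⬝ᵥ u = 0 := fun i => congrFun (congrArg Prod.snd hp) i
  have hdot : u ⬝ᵥ ((2:ℝ) • (F *ᵥ u) + ∑ i : B, lam i • (Cc i)) = 0 := by rw [h1]; simp
  rw [dotProduct_add, dotProduct_smul, dotProduct_finset_sum] at hdot
  have hz : ∀ i : B, u ⬝ᵥ (lam i • Cc i) = 0 := by
    intro i
    rw [dotProduct_smul, dotProduct_comm, h2 i, smul_zero]
  rw [Finset.sum_congr rfl (fun i _ => hz i), Finset.sum_const_zero, add_zero,
    smul_eq_mul] at hdot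
  have hu : u = 0 := by
    by_contra hne
    have h := hF.dotProduct_mulVec_pos hne
    have : 0 < u ⬝ᵥ (F *ᵥ u) := by simpa using h
    linarith
  rw [hu] at h1
  simp only [Matrix.mulVec_zero, smul_zero, zero_add] at h1
  have hlam : ∀ i : B, lam i = 0 := by
    classical
    set c : Fin q → ℝ := fun i => if h : i ∈ B then lam ⟨i, h⟩ else 0 with hc
    have hcs : ∑ i ∈ B, c i • (Cc i) = 0 := by
      rw [← h1, ← Finset.sum_coe_sort B (fun i => c i • Cc i)]
      apply Finset.sum_congr rfl
      intro i _
      simp only [hc, dif_pos i.2]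
    have hall := hB c (fun i hi => by simp only [hc, dif_neg hi]) hcs
    intro i
    have h := hall i
    simpa only [hc, dif_pos i.2] using h
  rw [hu]
  ext i
  · rfl
  · exact hlam i

lemma kktL_surj (hF : F.PosDef) (B : Finset (Fin q)) (hB : qpIndep Cc B) :
    Function.Surjective (kktL F Cc B) :=
  LinearMap.injective_iff_surjective.mp (kktL_inj F Cc hF B hB)

/-- right-hand side of the KKT system -/
def kktRHS (B : Finset (Fin q)) (x : Fin nx → ℝ) : (Fin m → ℝ) × (B → ℝ) :=
  (-(Gᵀ *ᵥ x), fun i : B => (T *ᵥ x) i + cc i)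

/-- linear part of the right-hand side -/
def kktRHSlin (B : Finset (Fin q)) (x : Fin nx → ℝ) : (Fin m → ℝ) × (B → ℝ) :=
  (-(Gᵀ *ᵥ x), fun i : B => (T *ᵥ x) i)

lemma kktRHS_eq (B : Finset (Fin q)) (x : Fin nx → ℝ) :
    kktRHS G T cc B x = kktRHSlin G T B x + (0, fun i : B => cc i) := by
  refine Prod.ext ?_ ?_
  · show -(Gᵀ *ᵥ x) = -(Gᵀ *ᵥ x) + 0
    rw [add_zero]
  · funext i
    rfl

lemma kktRHSlin_add (B : Finset (Fin q)) (x y : Fin nx → ℝ) :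
    kktRHSlin G T B (x + y) = kktRHSlin G T B x + kktRHSlin G T B y := by
  refine Prod.ext ?_ ?_
  · show -(Gᵀ *ᵥ (x + y)) = -(Gᵀ *ᵥ x) + -(Gᵀ *ᵥ y)
    rw [Matrix.mulVec_add]; abel
  · funext i
    show (T *ᵥ (x + y)) i.1 = (T *ᵥ x) i.1 + (T *ᵥ y) i.1
    rw [Matrix.mulVec_add]; rfl

lemma kktRHSlin_smul (B : Finset (Fin q)) (t : ℝ) (x : Fin nx → ℝ) :
    kktRHSlin G T B (t • x) = t • kktRHSlin G T B x := by
  refine Prod.ext ?_ ?_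
  · show -(Gᵀ *ᵥ (t • x)) = t • -(Gᵀ *ᵥ x)
    rw [Matrix.mulVec_smul]; rw [smul_neg]
  · funext i
    show (T *ᵥ (t • x)) i.1 = t * (T *ᵥ x) i.1
    rw [Matrix.mulVec_smul]; rfl

/-- the (unique) solution of the KKT system for active set `B` at parameter `x` -/
noncomputable def kktSol (hF : F.PosDef) (B : Finset (Fin q)) (hB : qpIndep Cc B)
    (x : Fin nx → ℝ) : (Fin m → ℝ) × (B → ℝ) :=
  Classical.choose (kktL_surj F Cc hF B hB (kktRHS G T cc B x))

lemma kktSol_spec (hF : F.PosDef) (B : Finset (Fin q)) (hB : qpIndep Cc B) (x : Fin nx → ℝ) :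
    kktL F Cc B (kktSol F G Cc T cc hF B hB x) = kktRHS G T cc B x :=
  Classical.choose_spec (kktL_surj F Cc hF B hB (kktRHS G T cc B x))

/-- linear part of the solution map -/
noncomputable def kktD (hF : F.PosDef) (B : Finset (Fin q)) (hB : qpIndep Cc B) :
    (Fin nx → ℝ) →ₗ[ℝ] ((Fin m → ℝ) × (B → ℝ)) where
  toFun x := kktSol F G Cc T cc hF B hB x - kktSol F G Cc T cc hF B hB 0
  map_add' x y := by
    apply kktL_inj F Cc hF B hB
    have h0 : kktRHS G T cc B 0 = (0, fun i : B => cc i) := by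
      rw [kktRHS_eq]
      have : kktRHSlin G T B (0 : Fin nx → ℝ) = 0 := by
        have := kktRHSlin_smul G T B (0:ℝ) (0 : Fin nx → ℝ)
        simpa using this
      rw [this, zero_add]
    have key : ∀ z : Fin nx → ℝ,
        kktL F Cc B (kktSol F G Cc T cc hF B hB z - kktSol F G Cc T cc hF B hB 0)
          = kktRHSlin G T B z := by
      intro z
      rw [map_sub, kktSol_spec, kktSol_spec, h0, kktRHS_eq]
      abel
    rw [map_add, key, key, key, kktRHSlin_add]
  map_smul' t x := by
    apply kktL_inj F Cc hF B hB
    have h0 : kktRHS G T cc B 0 = (0, fun i : B => cc i) := by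
      rw [kktRHS_eq]
      have : kktRHSlin G T B (0 : Fin nx → ℝ) = 0 := by
        have := kktRHSlin_smul G T B (0:ℝ) (0 : Fin nx → ℝ)
        simpa using this
      rw [this, zero_add]
    have key : ∀ z : Fin nx → ℝ,
        kktL F Cc B (kktSol F G Cc T cc hF B hB z - kktSol F G Cc T cc hF B hB 0)
          = kktRHSlin G T B z := by
      intro z
      rw [map_sub, kktSol_spec, kktSol_spec, h0, kktRHS_eq]
      abel
    rw [RingHom.id_apply, (kktL F Cc B).map_smul, key, key, kktRHSlin_smul]

lemma kktSol_eq (hF : F.PosDef) (B : Finset (Fin q)) (hB : qpIndep Cc B) (x : Fin nx → ℝ) :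
    kktSol F G Cc T cc hF B hB x
      = kktD F G Cc T cc hF B hB x + kktSol F G Cc T cc hF B hB 0 := by
  show _ = (kktSol F G Cc T cc hF B hB x - kktSol F G Cc T cc hF B hB 0) + _
  abel

/-- primal part of the solution -/
noncomputable def qpU (hF : F.PosDef) (B : Finset (Fin q)) (hB : qpIndep Cc B)
    (x : Fin nx → ℝ) : Fin m → ℝ :=
  (kktSol F G Cc T cc hF B hB x).1

/-- multiplier part of the solution, extended by zero -/
noncomputable def qpLam (hF : F.PosDef) (B : Finset (Fin q)) (hB : qpIndep Cc B)
    (x : Fin nx → ℝ) : Fin q → ℝ :=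
  fun i => if h : i ∈ B then (kktSol F G Cc T cc hF B hB x).2 ⟨i, h⟩ else 0

/-- extension-by-zero as a linear map -/
noncomputable def extL (B : Finset (Fin q)) : (B → ℝ) →ₗ[ℝ] (Fin q → ℝ) where
  toFun v := fun i => if h : i ∈ B then v ⟨i, h⟩ else 0
  map_add' v w := by
    funext i
    by_cases h : i ∈ B <;> simp [h]
  map_smul' t v := by
    funext i
    by_cases h : i ∈ B <;> simp [h]

/-- KKT stationarity written with multipliers over all of `Fin q` -/
lemma kkt_stationarity (hF : F.PosDef) (B : Finset (Fin q)) (hB : qpIndep Cc B)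
    (x : Fin nx → ℝ) :
    (2:ℝ) • (F *ᵥ qpU F G Cc T cc hF B hB x) + Gᵀ *ᵥ x
      + ∑ i, qpLam F G Cc T cc hF B hB x i • (Cc i) = 0 := by
  have hspec := kktSol_spec F G Cc T cc hF B hB x
  have h1 : (2:ℝ) • (F *ᵥ (kktSol F G Cc T cc hF B hB x).1)
      + ∑ i : B, (kktSol F G Cc T cc hF B hB x).2 i • (Cc i) = -(Gᵀ *ᵥ x) :=
    congrArg Prod.fst hspec
  have hsum : ∑ i, qpLam F G Cc T cc hF B hB x i • (Cc i)
      = ∑ i : B, (kktSol F G Cc T cc hF B hB x).2 i • (Cc i) := by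
    have hzero : ∀ i ∈ Finset.univ, i ∉ B → qpLam F G Cc T cc hF B hB x i • (Cc i) = 0 :=
      fun i _ hi => by simp [qpLam, dif_neg hi]
    rw [← Finset.sum_subset (Finset.subset_univ B) hzero,
      ← Finset.sum_coe_sort B (fun i => qpLam F G Cc T cc hF B hB x i • (Cc i))]
    exact Finset.sum_congr rfl fun i _ => by simp [qpLam, dif_pos i.2]
  rw [hsum]
  have hre : (2:ℝ) • (F *ᵥ qpU F G Cc T cc hF B hB x) + Gᵀ *ᵥ x
      + ∑ i : B, (kktSol F G Cc T cc hF B hB x).2 i • (Cc i)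
      = ((2:ℝ) • (F *ᵥ (kktSol F G Cc T cc hF B hB x).1)
        + ∑ i : B, (kktSol F G Cc T cc hF B hB x).2 i • (Cc i)) + Gᵀ *ᵥ x := by
    rw [qpU]; abel
  rw [hre, h1]
  abel


/-- KKT primal feasibility on B (with equality) -/
lemma kkt_active (hF : F.PosDef) (B : Finset (Fin q)) (hB : qpIndep Cc B)
    (x : Fin nx → ℝ) :
    ∀ i ∈ B, (Cc *ᵥ qpU F G Cc T cc hF B hB x) i = (T *ᵥ x) i + cc i := by
  intro i hi
  have hspec := kktSol_spec F G Cc T cc hF B hB x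
  have h2 := congrFun (congrArg Prod.snd hspec) ⟨i, hi⟩
  exact h2

/-- uniqueness of KKT solutions -/
lemma kkt_unique (hF : F.PosDef) (B : Finset (Fin q)) (hB : qpIndep Cc B)
    (x : Fin nx → ℝ) (u : Fin m → ℝ) (lam : Fin q → ℝ)
    (hsupp : ∀ i ∉ B, lam i = 0)
    (heq1 : (2:ℝ) • (F *ᵥ u) + Gᵀ *ᵥ x + ∑ i, lam i • (Cc i) = 0)
    (heq2 : ∀ i ∈ B, (Cc *ᵥ u) i = (T *ᵥ x) i + cc i) :
    u = qpU F G Cc T cc hF B hB x ∧ lam = qpLam F G Cc T cc hF B hB x := by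
  classical
  set p : (Fin m → ℝ) × (B → ℝ) := (u, fun i : B => lam i) with hp
  have hLp : kktL F Cc B p = kktRHS G T cc B x := by
    refine Prod.ext ?_ ?_
    · show (2:ℝ) • (F *ᵥ u) + ∑ i : B, lam i • (Cc i) = -(Gᵀ *ᵥ x)
      have hsum : ∑ i, lam i • (Cc i) = ∑ i : B, lam i • (Cc i) := by
        have hzero : ∀ i ∈ Finset.univ, i ∉ B → lam i • (Cc i) = 0 :=
          fun i _ hi => by rw [hsupp i hi, zero_smul]
        rw [← Finset.sum_subset (Finset.subset_univ B) hzero,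
          ← Finset.sum_coe_sort B (fun i => lam i • (Cc i))]
      rw [← hsum]
      have : (2:ℝ) • (F *ᵥ u) + ∑ i, lam i • (Cc i)
          = ((2:ℝ) • (F *ᵥ u) + Gᵀ *ᵥ x + ∑ i, lam i • (Cc i)) - Gᵀ *ᵥ x := by abel
      rw [this, heq1]
      abel
    · funext i
      exact heq2 i i.2
  have := kktL_inj F Cc hF B hB (hLp.trans (kktSol_spec F G Cc T cc hF B hB x).symm)
  constructor
  · exact congrArg Prod.fst this
  · funext i
    by_cases hi : i ∈ B
    · have := congrFun (congrArg Prod.snd this) ⟨i, hi⟩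
      simpa [qpLam, dif_pos hi] using this
    · rw [hsupp i hi]
      simp [qpLam, dif_neg hi]

/-- the affine matrices representing qpU -/
noncomputable def qpK (hF : F.PosDef) (B : Finset (Fin q)) (hB : qpIndep Cc B) :
    Matrix (Fin m) (Fin nx) ℝ :=
  Matrix.of fun i j => (kktD F G Cc T cc hF B hB (Pi.single j 1)).1 i

noncomputable def qpg (hF : F.PosDef) (B : Finset (Fin q)) (hB : qpIndep Cc B) :
    Fin m → ℝ :=
  (kktSol F G Cc T cc hF B hB 0).1

noncomputable def qpN (hF : F.PosDef) (B : Finset (Fin q)) (hB : qpIndep Cc B) :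
    Matrix (Fin q) (Fin nx) ℝ :=
  Matrix.of fun i j => extL B (kktD F G Cc T cc hF B hB (Pi.single j 1)).2 i

noncomputable def qph (hF : F.PosDef) (B : Finset (Fin q)) (hB : qpIndep Cc B) :
    Fin q → ℝ :=
  qpLam F G Cc T cc hF B hB 0

lemma qpU_affine (hF : F.PosDef) (B : Finset (Fin q)) (hB : qpIndep Cc B) (x : Fin nx → ℝ) :
    qpU F G Cc T cc hF B hB x
      = qpK F G Cc T cc hF B hB *ᵥ x + qpg F G Cc T cc hF B hB := by
  set L1 : (Fin nx → ℝ) →ₗ[ℝ] (Fin m → ℝ) :=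
    (LinearMap.fst ℝ (Fin m → ℝ) (B → ℝ)).comp (kktD F G Cc T cc hF B hB) with hL1
  funext i
  have h1 : qpU F G Cc T cc hF B hB x = L1 x + qpg F G Cc T cc hF B hB := by
    rw [qpU, kktSol_eq F G Cc T cc hF B hB x]
    rfl
  rw [h1]
  have h2 : L1 x i = ∑ j, L1 (Pi.single j (1:ℝ)) i * x j := linmap_repr L1 x i
  show L1 x i + qpg F G Cc T cc hF B hB i
    = (qpK F G Cc T cc hF B hB *ᵥ x) i + qpg F G Cc T cc hF B hB i
  rw [h2]
  rfl

lemma qpLam_affine (hF : F.PosDef) (B : Finset (Fin q)) (hB : qpIndep Cc B) (x : Fin nx → ℝ) :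
    qpLam F G Cc T cc hF B hB x
      = qpN F G Cc T cc hF B hB *ᵥ x + qph F G Cc T cc hF B hB := by
  set L2 : (Fin nx → ℝ) →ₗ[ℝ] (Fin q → ℝ) :=
    (extL B).comp ((LinearMap.snd ℝ (Fin m → ℝ) (B → ℝ)).comp
      (kktD F G Cc T cc hF B hB)) with hL2
  funext i
  have h1 : qpLam F G Cc T cc hF B hB x i = L2 x i + qph F G Cc T cc hF B hB i := by
    rw [qpLam, qph, qpLam]
    have hsol := kktSol_eq F G Cc T cc hF B hB x
    by_cases hi : i ∈ B
    · simp only [dif_pos hi]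
      have := congrFun (congrArg Prod.snd hsol) ⟨i, hi⟩
      rw [this]
      show _ = extL B (kktD F G Cc T cc hF B hB x).2 i + _
      simp only [extL, LinearMap.coe_mk, AddHom.coe_mk, dif_pos hi]
      rfl
    · simp only [dif_neg hi]
      show (0:ℝ) = extL B (kktD F G Cc T cc hF B hB x).2 i + 0
      simp only [extL, LinearMap.coe_mk, AddHom.coe_mk, dif_neg hi]
      rw [add_zero]
  rw [h1]
  have h2 : L2 x i = ∑ j, L2 (Pi.single j (1:ℝ)) i * x j := linmap_repr L2 x i
  show L2 x i + qph F G Cc T cc hF B hB i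
    = (qpN F G Cc T cc hF B hB *ᵥ x) i + qph F G Cc T cc hF B hB i
  rw [h2]
  rfl

/-- the critical region for active set B -/
def qpReg (hF : F.PosDef) (B : Finset (Fin q)) (hB : qpIndep Cc B) : Set (Fin nx → ℝ) :=
  {x | (∀ i, (Cc *ᵥ qpU F G Cc T cc hF B hB x) i ≤ (T *ᵥ x) i + cc i) ∧
       (∀ i, 0 ≤ qpLam F G Cc T cc hF B hB x i)}

/-- on the critical region, qpU is feasible and minimizes -/
lemma qpReg_opt (hF : F.PosDef) (B : Finset (Fin q)) (hB : qpIndep Cc B)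
    (x : Fin nx → ℝ) (hx : x ∈ qpReg F G Cc T cc hF B hB) :
    qpU F G Cc T cc hF B hB x ∈ qpFeas Cc T cc x ∧
      IsMinOn (qpJ F G x) (qpFeas Cc T cc x) (qpU F G Cc T cc hF B hB x) := by
  obtain ⟨hfeas, hlam⟩ := hx
  have hsym : Fᵀ = F := by
    have := hF.1
    simpa [Matrix.IsHermitian] using this
  refine ⟨hfeas, ?_⟩
  intro v hv
  simp only [Set.mem_setOf_eq]
  set u : Fin m → ℝ := qpU F G Cc T cc hF B hB x with hu
  have hexp := qpJ_expand F G hsym x u v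
  have hpsd : 0 ≤ (v - u) ⬝ᵥ (F *ᵥ (v - u)) := by
    have := hF.posSemidef.dotProduct_mulVec_nonneg (v - u)
    simpa using this
  set S : Fin m → ℝ := ∑ i, qpLam F G Cc T cc hF B hB x i • (Cc i) with hS
  have hst : (2:ℝ) • (F *ᵥ u) + Gᵀ *ᵥ x + S = 0 := by
    rw [hS, hu]
    exact kkt_stationarity F G Cc T cc hF B hB x
  have hgrad : qpGrad F G x u = -S := by
    have h1 : qpGrad F G x u = ((2:ℝ) • (F *ᵥ u) + Gᵀ *ᵥ x + S) - S := by
      rw [qpGrad]; abel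
    rw [h1, hst]
    abel
  have hdot : 0 ≤ qpGrad F G x u ⬝ᵥ (v - u) := by
    rw [hgrad, neg_dotProduct]
    have hSd : S ⬝ᵥ (v - u) = ∑ i, qpLam F G Cc T cc hF B hB x i * ((Cc i) ⬝ᵥ (v - u)) := by
      rw [hS, dotProduct_comm, dotProduct_finset_sum]
      exact Finset.sum_congr rfl fun i _ => by
        rw [dotProduct_smul, smul_eq_mul, dotProduct_comm]
    rw [hSd]
    rw [neg_nonneg]
    apply Finset.sum_nonpos
    intro i _
    by_cases hib : i ∈ B
    · apply mul_nonpos_of_nonneg_of_nonpos (hlam i)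
      have hact : (Cc *ᵥ u) i = (T *ᵥ x) i + cc i := by
        rw [hu]; exact kkt_active F G Cc T cc hF B hB x i hib
      have hvf : (Cc *ᵥ v) i ≤ (T *ᵥ x) i + cc i := hv i
      have : (Cc i) ⬝ᵥ (v - u) = (Cc *ᵥ v) i - (Cc *ᵥ u) i := by
        rw [dotProduct_sub]; rfl
      rw [this, hact]
      linarith
    · have : qpLam F G Cc T cc hF B hB x i = 0 := by simp [qpLam, dif_neg hib]
      rw [this, zero_mul]
  linarith [hexp, hdot, hpsd]

lemma qp_min_unique (hF : F.PosDef) (x : Fin nx → ℝ) (u u' : Fin m → ℝ)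
    (hu : u ∈ qpFeas Cc T cc x) (hu' : u' ∈ qpFeas Cc T cc x)
    (hmin : IsMinOn (qpJ F G x) (qpFeas Cc T cc x) u)
    (hmin' : IsMinOn (qpJ F G x) (qpFeas Cc T cc x) u') : u = u' := by
  by_contra hne
  have h1 := qp_min_strict F G Cc T cc hF x u' hmin' hu' u hu hne
  have h2 := hmin hu'
  simp only [Set.mem_setOf_eq] at h2
  linarith

lemma qp_cover (hF : F.PosDef) (x : Fin nx → ℝ) (u0 : Fin m → ℝ)
    (hmem : u0 ∈ qpFeas Cc T cc x)
    (hmin : IsMinOn (qpJ F G x) (qpFeas Cc T cc x) u0) :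
    ∃ (B : Finset (Fin q)) (hB : qpIndep Cc B),
      x ∈ qpReg F G Cc T cc hF B hB ∧ qpU F G Cc T cc hF B hB x = u0 := by
  classical
  set A : Finset (Fin q) :=
    Finset.univ.filter (fun i => (Cc *ᵥ u0) i = (T *ᵥ x) i + cc i) with hA
  have hcone := qp_cone_vi F G Cc T cc hF x u0 hmin hmem
  have hfark : ∀ d : Fin m → ℝ, (∀ i ∈ A, (Cc i) ⬝ᵥ d ≤ 0) → 0 ≤ qpGrad F G x u0 ⬝ᵥ d := by
    intro d hd
    apply hcone d
    intro i hi
    exact hd i (Finset.mem_filter.mpr ⟨Finset.mem_univ i, hi⟩)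
  obtain ⟨lam, hl1, hl2, hl3⟩ := farkas_aux A (fun i => Cc i) (qpGrad F G x u0) hfark
  obtain ⟨B, mu, hBsub, hmu1, hmu2, hmu3, hmu4⟩ :=
    caratheodory_cone (fun i : Fin q => Cc i) A (-(qpGrad F G x u0)) lam hl1 hl2 hl3
  have hBind : qpIndep Cc B := hmu4
  have heq1 : (2:ℝ) • (F *ᵥ u0) + Gᵀ *ᵥ x + ∑ i, mu i • (Cc i) = 0 := by
    have hsum : ∑ i, mu i • (Cc i) = ∑ i ∈ B, mu i • (Cc i) := by
      exact (Finset.sum_subset (Finset.subset_univ B)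
        (fun i _ hi => by rw [hmu2 i hi, zero_smul])).symm
    rw [hsum, ← hmu3, qpGrad]
    abel
  have heq2 : ∀ i ∈ B, (Cc *ᵥ u0) i = (T *ᵥ x) i + cc i := by
    intro i hi
    have := hBsub hi
    rw [hA, Finset.mem_filter] at this
    exact this.2
  obtain ⟨hueq, hleq⟩ := kkt_unique F G Cc T cc hF B hBind x u0 mu hmu2 heq1 heq2
  refine ⟨B, hBind, ⟨?_, ?_⟩, hueq.symm⟩
  · intro i
    rw [← hueq]
    exact hmem i
  · intro i
    rw [← hleq]
    exact hmu1 i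

lemma qpReg_poly (hF : F.PosDef) (B : Finset (Fin q)) (hB : qpIndep Cc B) :
    IsPolyhedron (qpReg F G Cc T cc hF B hB) := by
  classical
  set K := qpK F G Cc T cc hF B hB with hK
  set g := qpg F G Cc T cc hF B hB with hg
  set N := qpN F G Cc T cc hF B hB with hN
  set hh := qph F G Cc T cc hF B hB with hhh
  refine ⟨q + q,
    Matrix.of fun r j => Fin.addCases (fun i => (Cc * K) i j - T i j) (fun i => - N i j) r,
    fun r => Fin.addCases (fun i => cc i - (Cc *ᵥ g) i) (fun i => hh i) r, ?_⟩
  have hsum1 : ∀ (x : Fin nx → ℝ) (i : Fin q),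
      ∑ j, ((Cc * K) i j - T i j) * x j = ((Cc * K) *ᵥ x) i - (T *ᵥ x) i := by
    intro x i
    simp [Matrix.mulVec, dotProduct, sub_mul, Finset.sum_sub_distrib]
  have hsum2 : ∀ (x : Fin nx → ℝ) (i : Fin q),
      ∑ j, (- N i j) * x j = - ((N *ᵥ x) i) := by
    intro x i
    simp [Matrix.mulVec, dotProduct, neg_mul, Finset.sum_neg_distrib]
  have hCcu : ∀ (x : Fin nx → ℝ) (i : Fin q),
      (Cc *ᵥ qpU F G Cc T cc hF B hB x) i = ((Cc * K) *ᵥ x) i + (Cc *ᵥ g) i := by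
    intro x i
    rw [qpU_affine F G Cc T cc hF B hB x, Matrix.mulVec_add, Matrix.mulVec_mulVec]
    rfl
  have hlam : ∀ (x : Fin nx → ℝ) (i : Fin q),
      qpLam F G Cc T cc hF B hB x i = (N *ᵥ x) i + hh i := by
    intro x i
    rw [qpLam_affine F G Cc T cc hF B hB x]
    rfl
  ext x
  simp only [qpReg, Set.mem_setOf_eq]
  constructor
  · rintro ⟨h1, h2⟩ r
    refine Fin.addCases ?_ ?_ r
    · intro i
      simp only [Matrix.of_apply, Fin.addCases_left]
      have := h1 i
      rw [hCcu x i] at this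
      rw [hsum1 x i]
      linarith
    · intro i
      simp only [Matrix.of_apply, Fin.addCases_right]
      have := h2 i
      rw [hlam x i] at this
      rw [hsum2 x i]
      linarith
  · intro h
    constructor
    · intro i
      have := h (Fin.castAdd q i)
      simp only [Matrix.of_apply, Fin.addCases_left] at this
      rw [hsum1 x i] at this
      rw [hCcu x i]
      linarith
    · intro i
      have := h (Fin.natAdd q i)
      simp only [Matrix.of_apply, Fin.addCases_right] at this
      rw [hsum2 x i] at this
      rw [hlam x i]
      linarith
end

lemma isPolyhedron_empty {n : ℕ} : IsPolyhedron (∅ : Set (Fin n → ℝ)) := by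
  refine ⟨1, 0, fun _ => -1, ?_⟩
  ext x
  simp only [Set.mem_empty_iff_false, Set.mem_setOf_eq, false_iff]
  push_neg
  exact ⟨0, by norm_num⟩

lemma isPolyhedron_closed {n : ℕ} {S : Set (Fin n → ℝ)} (h : IsPolyhedron S) : IsClosed S := by
  obtain ⟨k, Z, z, rfl⟩ := h
  have : {x : Fin n → ℝ | ∀ i, (∑ j, Z i j * x j) ≤ z i}
      = ⋂ i, {x : Fin n → ℝ | (∑ j, Z i j * x j) ≤ z i} := by
    ext x; simp [Set.mem_iInter]
  rw [this]
  refine isClosed_iInter fun i => isClosed_le ?_ continuous_const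
  exact continuous_finset_sum _ fun j _ => continuous_const.mul (continuous_apply j)

lemma interior_halfspace' {n : ℕ} (a : Fin n → ℝ) (c : ℝ) (ha : a ≠ 0) :
    interior {x : Fin n → ℝ | ∑ j, a j * x j ≤ c} ⊆ {x | ∑ j, a j * x j < c} := by
  intro x hx
  obtain ⟨j₀, hj₀⟩ : ∃ j, a j ≠ 0 := by
    by_contra hcon
    push_neg at hcon
    exact ha (funext hcon)
  rw [mem_interior_iff_mem_nhds, Metric.mem_nhds_iff] at hx
  obtain ⟨ε, hε, hball⟩ := hx
  set s : ℝ := if 0 ≤ a j₀ then 1 else -1 with hs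
  have habs : a j₀ * s = |a j₀| := by
    rw [hs]
    by_cases hc : 0 ≤ a j₀
    · rw [if_pos hc, mul_one, abs_of_nonneg hc]
    · rw [if_neg hc, abs_of_neg (lt_of_not_ge hc)]; ring
  have hsabs : |s| = 1 := by
    rw [hs]
    by_cases hc : 0 ≤ a j₀ <;> simp [hc]
  set y : Fin n → ℝ := x + Pi.single j₀ (ε / 2 * s) with hy
  have hdist : dist y x < ε := by
    rw [dist_pi_lt_iff hε]
    intro j
    rw [hy, Pi.add_apply, Real.dist_eq]
    by_cases hj : j = j₀
    · subst hj
      rw [Pi.single_eq_same]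
      have : |x j + ε / 2 * s - x j| = ε / 2 * |s| := by
        rw [show x j + ε / 2 * s - x j = ε / 2 * s by ring, abs_mul,
          abs_of_nonneg (by linarith : (0:ℝ) ≤ ε / 2)]
      rw [this, hsabs]
      linarith
    · rw [Pi.single_eq_of_ne hj]
      simpa using hε
  have hmem : y ∈ {x : Fin n → ℝ | ∑ j, a j * x j ≤ c} := hball (Metric.mem_ball.mpr hdist)
  have hsum : ∑ j, a j * y j = (∑ j, a j * x j) + ε / 2 * |a j₀| := by
    have hyj : ∀ j, a j * y j
        = a j * x j + a j * (Pi.single j₀ (ε / 2 * s) : Fin n → ℝ) j := by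
      intro j
      rw [hy, Pi.add_apply]; ring
    rw [Finset.sum_congr rfl fun j _ => hyj j, Finset.sum_add_distrib]
    congr 1
    rw [Finset.sum_eq_single j₀]
    · rw [Pi.single_eq_same]
      rw [show a j₀ * (ε / 2 * s) = ε / 2 * (a j₀ * s) by ring, habs]
    · intro j _ hj
      rw [Pi.single_eq_of_ne hj, mul_zero]
    · intro hj
      exact absurd (Finset.mem_univ j₀) hj
  rw [Set.mem_setOf_eq, hsum] at hmem
  have : 0 < ε / 2 * |a j₀| := by
    apply mul_pos (by linarith)
    exact abs_pos.mpr hj₀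
  show ∑ j, a j * x j < c
  linarith

/-- refinement of a finite family of polyhedra into polyhedra with disjoint interiors -/
lemma polyhedral_refine {n : ℕ} {ι : Type*} [Fintype ι] [DecidableEq ι]
    (R : ι → Set (Fin n → ℝ)) (hpoly : ∀ i, IsPolyhedron (R i)) :
    ∃ (r : ℕ) (P : Fin r → Set (Fin n → ℝ)),
      (∀ k, IsPolyhedron (P k)) ∧
      (∀ k l, k ≠ l → interior (P k) ∩ interior (P l) = ∅) ∧
      (⋃ k, P k) = (⋃ i, R i) ∧
      (∀ k, P k = ∅ ∨ ∃ i, P k ⊆ R i) := by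
  classical
  choose mm Z z hZ using hpoly
  -- normalize right-hand sides so that no row is (0, 0)
  set z' : ∀ i, Fin (mm i) → ℝ :=
    fun i k => if (∀ j, Z i k j = 0) ∧ z i k = 0 then 1 else z i k with hz'
  have hR' : ∀ i, R i = {x | ∀ k, (∑ j, Z i k j * x j) ≤ z' i k} := by
    intro i
    rw [hZ i]
    ext x
    simp only [Set.mem_setOf_eq]
    refine forall_congr' fun k => ?_
    by_cases hc : (∀ j, Z i k j = 0) ∧ z i k = 0
    · have hzero : ∑ j, Z i k j * x j = 0 :=
        Finset.sum_eq_zero fun j _ => by rw [hc.1 j, zero_mul]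
      simp only [hz', if_pos hc, hzero, hc.2]
      norm_num
    · simp only [hz', if_neg hc]
  have hnz : ∀ i k, (∀ j, Z i k j = 0) → z' i k ≠ 0 := by
    intro i k hrow0
    by_cases hc : z i k = 0
    · have he : z' i k = 1 := by
        simp only [hz']
        rw [if_pos ⟨hrow0, hc⟩]
      rw [he]; norm_num
    · have he : z' i k = z i k := by
        simp only [hz']
        rw [if_neg (fun hand => hc hand.2)]
      rw [he]; exact hc
  -- the index of all constraints
  set Kt := (i : ι) × Fin (mm i) with hKt
  set row : Kt → (Fin n → ℝ) := fun k => Z k.1 k.2 with hrow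
  set rhs : Kt → ℝ := fun k => z' k.1 k.2 with hrhs
  -- constraint matrix of a cell
  set Zc : (Kt → Bool) → Kt → (Fin n → ℝ) :=
    fun σ k => if σ k = true then row k else -row k with hZc
  set zc : (Kt → Bool) → Kt → ℝ :=
    fun σ k => if σ k = true then rhs k else -rhs k with hzc
  set Cell : (Kt → Bool) → Set (Fin n → ℝ) :=
    fun σ => {x | ∀ k, (∑ j, Zc σ k j * x j) ≤ zc σ k} with hCell
  set good : (Kt → Bool) → Prop := fun σ => ∃ i, ∀ l : Fin (mm i), σ ⟨i, l⟩ = true with hgood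
  set P' : (Kt → Bool) → Set (Fin n → ℝ) := fun σ => if good σ then Cell σ else ∅ with hP'
  -- helpers
  have cell_le : ∀ (σ : Kt → Bool) (k : Kt) (x : Fin n → ℝ), x ∈ Cell σ → σ k = true →
      ∑ j, row k j * x j ≤ rhs k := by
    intro σ k x hx hσ
    have := hx k
    simp only [hZc, hzc] at this
    rw [if_pos hσ, if_pos hσ] at this
    exact this
  have cell_ge : ∀ (σ : Kt → Bool) (k : Kt) (x : Fin n → ℝ), x ∈ Cell σ → σ k = false →
      rhs k ≤ ∑ j, row k j * x j := by
    intro σ k x hx hσ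
    have := hx k
    simp only [hZc, hzc] at this
    rw [if_neg (by simp [hσ]), if_neg (by simp [hσ])] at this
    have hneg : ∑ j, (-row k) j * x j = -∑ j, row k j * x j := by
      simp [neg_mul]
    rw [hneg] at this
    linarith
  have cell_sub : ∀ (σ : Kt → Bool) (i : ι), (∀ l : Fin (mm i), σ ⟨i, l⟩ = true) →
      Cell σ ⊆ R i := by
    intro σ i hi x hx
    rw [hR' i]
    intro l
    exact cell_le σ ⟨i, l⟩ x hx (hi l)
  -- disjointness core
  have disj : ∀ (σ τ : Kt → Bool) (k₀ : Kt), σ k₀ = true → τ k₀ = false →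
      interior (Cell σ) ∩ interior (Cell τ) = ∅ := by
    intro σ τ k₀ hσ hτ
    rw [Set.eq_empty_iff_forall_notMem]
    rintro x ⟨hx1, hx2⟩
    have hxσ : x ∈ Cell σ := interior_subset hx1
    have hxτ : x ∈ Cell τ := interior_subset hx2
    have hge : rhs k₀ ≤ ∑ j, row k₀ j * x j := cell_ge τ k₀ x hxτ hτ
    by_cases hzero : ∀ j, row k₀ j = 0
    · have hsum0 : ∑ j, row k₀ j * x j = 0 :=
        Finset.sum_eq_zero fun j _ => by rw [hzero j, zero_mul]
      have hle : ∑ j, row k₀ j * x j ≤ rhs k₀ := cell_le σ k₀ x hxσ hσ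
      have : rhs k₀ = 0 := le_antisymm (by linarith) (by linarith)
      exact hnz k₀.1 k₀.2 hzero this
    · have hrowne : row k₀ ≠ 0 := fun h => hzero fun j => congrFun h j
      have hsub : Cell σ ⊆ {x | ∑ j, row k₀ j * x j ≤ rhs k₀} := by
        intro y hy
        exact cell_le σ k₀ y hy hσ
      have hlt : ∑ j, row k₀ j * x j < rhs k₀ :=
        interior_halfspace' (row k₀) (rhs k₀) hrowne (interior_mono hsub hx1)
      linarith
  -- cells are polyhedra
  have cell_poly : ∀ σ : Kt → Bool, IsPolyhedron (Cell σ) := by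
    intro σ
    set e := Fintype.equivFin Kt with he
    refine ⟨Fintype.card Kt, Matrix.of fun l j => Zc σ (e.symm l) j,
      fun l => zc σ (e.symm l), ?_⟩
    ext x
    simp only [hCell, Set.mem_setOf_eq, Matrix.of_apply]
    constructor
    · intro h l
      exact h (e.symm l)
    · intro h k
      have := h (e k)
      rwa [Equiv.symm_apply_apply] at this
  -- final indexing
  set r := Fintype.card (Kt → Bool) with hr
  set eS := (Fintype.equivFin (Kt → Bool)).symm with heS
  refine ⟨r, fun k => P' (eS k), ?_, ?_, ?_, ?_⟩
  · intro k
    by_cases hg : good (eS k)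
    · simp only [hP', if_pos hg]
      exact cell_poly (eS k)
    · simp only [hP', if_neg hg]
      exact isPolyhedron_empty
  · intro k l hkl
    have hne : eS k ≠ eS l := fun h => hkl (eS.injective h)
    by_cases hgk : good (eS k)
    · by_cases hgl : good (eS l)
      · obtain ⟨k₀, hk₀⟩ : ∃ k₀, eS k k₀ ≠ eS l k₀ := by
          by_contra hcon
          push_neg at hcon
          exact hne (funext hcon)
        simp only [hP', if_pos hgk, if_pos hgl]
        cases hbk : eS k k₀ with
        | false =>
          cases hbl : eS l k₀ with
          | false => exact absurd (hbk.trans hbl.symm) hk₀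
          | true =>
            rw [Set.inter_comm]
            exact disj (eS l) (eS k) k₀ hbl hbk
        | true =>
          cases hbl : eS l k₀ with
          | false => exact disj (eS k) (eS l) k₀ hbk hbl
          | true => exact absurd (hbk.trans hbl.symm) hk₀
      · simp only [hP', if_neg hgl]
        simp
    · simp only [hP', if_neg hgk]
      simp
  · apply Set.Subset.antisymm
    · apply Set.iUnion_subset
      intro k
      by_cases hg : good (eS k)
      · simp only [hP', if_pos hg]
        obtain ⟨i, hi⟩ := hg
        exact (cell_sub (eS k) i hi).trans (Set.subset_iUnion R i)
      · simp only [hP', if_neg hg]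
        simp
    · apply Set.iUnion_subset
      intro i x hx
      -- construct the sign vector of x
      set σ : Kt → Bool := fun k => decide ((∑ j, row k j * x j) ≤ rhs k) with hσ
      have hxcell : x ∈ Cell σ := by
        intro k
        by_cases hc : (∑ j, row k j * x j) ≤ rhs k
        · have hb : σ k = true := by simp [hσ, hc]
          simp only [hZc, hzc]
          rw [if_pos hb, if_pos hb]
          exact hc
        · have hb : ¬ (σ k = true) := by simp [hσ, hc]
          simp only [hZc, hzc]
          rw [if_neg hb, if_neg hb]
          push_neg at hc
          have hneg : ∑ j, (-row k) j * x j = -∑ j, row k j * x j := by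
            simp [neg_mul]
          rw [hneg]
          linarith
      have hgoodσ : good σ := by
        refine ⟨i, fun l => ?_⟩
        have hxi := hx
        rw [hR' i] at hxi
        simp [hσ, hrow, hrhs, hxi l]
      refine Set.mem_iUnion.mpr ⟨(Fintype.equivFin (Kt → Bool)) σ, ?_⟩
      have : eS ((Fintype.equivFin (Kt → Bool)) σ) = σ := by
        rw [heS, Equiv.symm_apply_apply]
      rw [this]
      simp only [hP', if_pos hgoodσ]
      exact hxcell
  · intro k
    by_cases hg : good (eS k)
    · right
      obtain ⟨i, hi⟩ := hg
      refine ⟨i, ?_⟩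
      have : P' (eS k) ⊆ Cell (eS k) := by
        simp only [hP']
        split
        · exact Set.Subset.rfl
        · exact Set.empty_subset _
      exact this.trans (cell_sub (eS k) i hi)
    · left
      simp only [hP', if_neg hg]

lemma continuousOn_of_closed_cover {n md r : ℕ} (P : Fin r → Set (Fin n → ℝ))
    (hclosed : ∀ k, IsClosed (P k)) (f : (Fin n → ℝ) → Fin md → ℝ)
    (g : Fin r → (Fin n → ℝ) → Fin md → ℝ) (hg : ∀ k, Continuous (g k))
    (hagree : ∀ k, ∀ x ∈ P k, f x = g k x) :
    ContinuousOn f (⋃ k, P k) := by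
  classical
  intro x₀ hx₀
  set D : Set (Fin n → ℝ) := ⋃ k, P k with hD
  set S : Finset (Fin r) := Finset.univ.filter (fun k => x₀ ∈ P k) with hS
  set U : Set (Fin n → ℝ) := (⋃ k : {k : Fin r // x₀ ∉ P k}, P k.1)ᶜ with hU
  have hUopen : IsOpen U := by
    rw [hU]
    exact (isClosed_iUnion_of_finite fun k : {k : Fin r // x₀ ∉ P k} =>
      hclosed k.1).isOpen_compl
  have hx₀U : x₀ ∈ U := by
    rw [hU]
    simp only [Set.mem_compl_iff, Set.mem_iUnion]
    rintro ⟨k, hk⟩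
    exact k.2 hk
  have hUnhds : U ∈ nhds x₀ := hUopen.mem_nhds hx₀U
  rw [← continuousWithinAt_inter hUnhds]
  have hbound : ∀ y ∈ D ∩ U, dist (f y) (f x₀) ≤ ∑ k ∈ S, dist (g k y) (g k x₀) := by
    rintro y ⟨hyD, hyU⟩
    obtain ⟨k, hk⟩ := Set.mem_iUnion.mp hyD
    have hkS : k ∈ S := by
      rw [hS, Finset.mem_filter]
      refine ⟨Finset.mem_univ k, ?_⟩
      by_contra hcon
      rw [hU] at hyU
      simp only [Set.mem_compl_iff, Set.mem_iUnion] at hyU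
      exact hyU ⟨⟨k, hcon⟩, hk⟩
    have hx₀k : x₀ ∈ P k := (Finset.mem_filter.mp hkS).2
    rw [hagree k y hk, hagree k x₀ hx₀k]
    exact Finset.single_le_sum (f := fun k' => dist (g k' y) (g k' x₀))
      (fun k' _ => dist_nonneg) hkS
  have hgcont : Continuous (fun y => ∑ k ∈ S, dist (g k y) (g k x₀)) :=
    continuous_finset_sum _ fun k _ => (hg k).dist continuous_const
  have hzero : (∑ k ∈ S, dist (g k x₀) (g k x₀)) = 0 :=
    Finset.sum_eq_zero fun k _ => dist_self _
  have htend : Filter.Tendsto (fun y => ∑ k ∈ S, dist (g k y) (g k x₀))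
      (nhdsWithin x₀ (D ∩ U)) (nhds 0) := by
    have := (hgcont.tendsto x₀).mono_left (nhdsWithin_le_nhds (s := D ∩ U))
    rwa [hzero] at this
  rw [ContinuousWithinAt, tendsto_iff_dist_tendsto_zero]
  apply squeeze_zero'
  · exact Filter.Eventually.of_forall fun y => dist_nonneg
  · exact eventually_nhdsWithin_of_forall hbound
  · exact htend

/-- the multi-parametric QP `min_u uᵀFu + xᵀGu s.t. C_c u ≤ T x + c_c` with
`F ≻ 0` has a unique minimizer for every feasible parameter `x`, and the minimizer map is a
continuous piecewise affine function on the feasibility region. -/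
theorem mpQP_solution_continuous_pwa (nx m q : ℕ)
    (F : Matrix (Fin m) (Fin m) ℝ) (hF : F.PosDef)
    (G : Matrix (Fin nx) (Fin m) ℝ)
    (Cc : Matrix (Fin q) (Fin m) ℝ) (T : Matrix (Fin q) (Fin nx) ℝ) (cc : Fin q → ℝ) :
    ∃ ustar : (Fin nx → ℝ) → Fin m → ℝ,
      -- unique minimizer at every feasible parameter
      (∀ x : Fin nx → ℝ, (∃ u : Fin m → ℝ, ∀ i, (Cc *ᵥ u) i ≤ (T *ᵥ x) i + cc i) →
        (∀ i, (Cc *ᵥ ustar x) i ≤ (T *ᵥ x) i + cc i) ∧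
        (∀ u : Fin m → ℝ, (∀ i, (Cc *ᵥ u) i ≤ (T *ᵥ x) i + cc i) → u ≠ ustar x →
          ustar x ⬝ᵥ (F *ᵥ ustar x) + x ⬝ᵥ (G *ᵥ ustar x) <
            u ⬝ᵥ (F *ᵥ u) + x ⬝ᵥ (G *ᵥ u))) ∧
      -- continuity on the feasibility region
      ContinuousOn ustar {x | ∃ u : Fin m → ℝ, ∀ i, (Cc *ᵥ u) i ≤ (T *ᵥ x) i + cc i} ∧
      -- piecewise affine structure on the feasibility region
      (∃ (nr : ℕ) (R : Fin nr → Set (Fin nx → ℝ))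
        (K : Fin nr → Matrix (Fin m) (Fin nx) ℝ) (g : Fin nr → Fin m → ℝ),
        (∀ i, IsPolyhedron (R i)) ∧
        (∀ i j, i ≠ j → interior (R i) ∩ interior (R j) = ∅) ∧
        (⋃ i, R i) = {x | ∃ u : Fin m → ℝ, ∀ i, (Cc *ᵥ u) i ≤ (T *ᵥ x) i + cc i} ∧
        (∀ i, ∀ x ∈ R i, ustar x = K i *ᵥ x + g i)) := by
  classical
  set XN : Set (Fin nx → ℝ) :=
    {x | ∃ u : Fin m → ℝ, ∀ i, (Cc *ᵥ u) i ≤ (T *ᵥ x) i + cc i} with hXN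
  have hXNfeas : ∀ x, x ∈ XN ↔ (qpFeas Cc T cc x).Nonempty := by
    intro x
    constructor
    · rintro ⟨u, hu⟩; exact ⟨u, hu⟩
    · rintro ⟨u, hu⟩; exact ⟨u, hu⟩
  -- the minimizer function
  set ustar : (Fin nx → ℝ) → Fin m → ℝ := fun x =>
    if h : x ∈ XN then
      Classical.choose (qp_exists_min F G Cc T cc hF x ((hXNfeas x).mp h)) else 0 with hustar
  have hspec : ∀ x (hx : x ∈ XN), ustar x ∈ qpFeas Cc T cc x ∧
      IsMinOn (qpJ F G x) (qpFeas Cc T cc x) (ustar x) := by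
    intro x hx
    have hs := Classical.choose_spec (qp_exists_min F G Cc T cc hF x ((hXNfeas x).mp hx))
    obtain ⟨h1, h2⟩ := hs
    simp only [hustar, dif_pos hx]
    exact ⟨h1, h2⟩
  -- the initial (possibly overlapping) cover by critical regions
  set R₀ : Finset (Fin q) → Set (Fin nx → ℝ) := fun B =>
    if h : qpIndep Cc B then qpReg F G Cc T cc hF B h else ∅ with hR₀
  have hR₀poly : ∀ B, IsPolyhedron (R₀ B) := by
    intro B
    by_cases h : qpIndep Cc B
    · simp only [hR₀, dif_pos h]
      exact qpReg_poly F G Cc T cc hF B h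
    · simp only [hR₀, dif_neg h]
      exact isPolyhedron_empty
  have hR₀sub : ∀ B, R₀ B ⊆ XN := by
    intro B x hx
    by_cases h : qpIndep Cc B
    · rw [hR₀] at hx
      simp only [dif_pos h] at hx
      have := (qpReg_opt F G Cc T cc hF B h x hx).1
      exact ⟨qpU F G Cc T cc hF B h x, this⟩
    · rw [hR₀] at hx
      simp only [dif_neg h] at hx
      exact absurd hx (Set.notMem_empty x)
  have hR₀cover : (⋃ B, R₀ B) = XN := by
    apply Set.Subset.antisymm
    · exact Set.iUnion_subset hR₀sub
    · intro x hx
      obtain ⟨hmem, hmin⟩ := hspec x hx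
      obtain ⟨B, hB, hreg, _⟩ := qp_cover F G Cc T cc hF x (ustar x) hmem hmin
      refine Set.mem_iUnion.mpr ⟨B, ?_⟩
      rw [hR₀]
      simp only [dif_pos hB]
      exact hreg
  have hR₀affine : ∀ B (h : qpIndep Cc B), ∀ x ∈ qpReg F G Cc T cc hF B h,
      ustar x = qpK F G Cc T cc hF B h *ᵥ x + qpg F G Cc T cc hF B h := by
    intro B h x hx
    obtain ⟨hfeas, hmin⟩ := qpReg_opt F G Cc T cc hF B h x hx
    have hxXN : x ∈ XN := ⟨qpU F G Cc T cc hF B h x, hfeas⟩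
    obtain ⟨hmem', hmin'⟩ := hspec x hxXN
    have := qp_min_unique F G Cc T cc hF x (ustar x) (qpU F G Cc T cc hF B h x)
      hmem' hfeas hmin' hmin
    rw [this]
    exact qpU_affine F G Cc T cc hF B h x
  -- refine into polyhedra with disjoint interiors
  obtain ⟨r, P, hPpoly, hPdisj, hPunion, hPsel⟩ := polyhedral_refine R₀ hR₀poly
  rw [hR₀cover] at hPunion
  -- select affine data on each refined piece
  set Q : Fin r → Prop := fun k => ∃ (B : Finset (Fin q)) (hB : qpIndep Cc B),
    P k ⊆ qpReg F G Cc T cc hF B hB with hQ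
  have hsel : ∀ k, P k = ∅ ∨ Q k := by
    intro k
    rcases hPsel k with h | ⟨B, hBsub⟩
    · exact Or.inl h
    · by_cases h : qpIndep Cc B
      · refine Or.inr ⟨B, h, ?_⟩
        rw [hR₀] at hBsub
        simpa only [dif_pos h] using hBsub
      · left
        rw [hR₀] at hBsub
        simp only [dif_neg h] at hBsub
        exact Set.subset_empty_iff.mp hBsub
  set Kmat : Fin r → Matrix (Fin m) (Fin nx) ℝ := fun k =>
    if h : Q k then qpK F G Cc T cc hF h.choose h.choose_spec.choose else 0 with hKmat
  set gvec : Fin r → Fin m → ℝ := fun k =>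
    if h : Q k then qpg F G Cc T cc hF h.choose h.choose_spec.choose else 0 with hgvec
  have haffine : ∀ k, ∀ x ∈ P k, ustar x = Kmat k *ᵥ x + gvec k := by
    intro k x hx
    rcases hsel k with hemp | hq
    · rw [hemp] at hx
      exact absurd hx (Set.notMem_empty x)
    · have hsub := hq.choose_spec.choose_spec
      simp only [hKmat, hgvec, dif_pos hq]
      exact hR₀affine hq.choose hq.choose_spec.choose x (hsub hx)
  refine ⟨ustar, ?_, ?_, ?_⟩
  · -- part 1 : unique minimizer
    intro x hx
    have hxXN : x ∈ XN := hx
    obtain ⟨hmem, hmin⟩ := hspec x hxXN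
    refine ⟨hmem, ?_⟩
    intro u hu hne
    exact qp_min_strict F G Cc T cc hF x (ustar x) hmin hmem u hu hne
  · -- part 2 : continuity
    have hcont := continuousOn_of_closed_cover P
      (fun k => isPolyhedron_closed (hPpoly k)) ustar
      (fun k => fun x => Kmat k *ᵥ x + gvec k)
      (fun k => by
        apply continuous_pi
        intro i
        show Continuous fun x : Fin nx → ℝ => (∑ j, Kmat k i j * x j) + gvec k i
        exact (continuous_finset_sum _ fun j _ =>
          continuous_const.mul (continuous_apply j)).add continuous_const)
      haffine
    rw [hPunion] at hcont
    exact hcont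
  · -- part 3 : PWA structure
    exact ⟨r, P, Kmat, gvec, hPpoly, hPdisj, hPunion, haffine⟩
end

section
/- Let A ∈ ℝ^{n_x×n_x}, B ∈ ℝ^{n_x×n_u}, let U = {u ∈ ℝ^{n_u} : C_u u ≤ c_u} and let C_inv = {x ∈ ℝ^{n_x} : C_inv x ≤ c_inv} be a nonempty polytope that is control invariant, i.e., for every x ∈ C_inv there exists u ∈ U with A x + B u ∈ C_inv. Then for every x ∈ C_inv and every v ∈ ℝ^{n_u} (e.g., the output of a neural-network controller), the projection problem minimize ‖v − û‖₂² subject to C_u û ≤ c_u and C_inv(A x + B û) ≤ c_inv has a nonempty feasible set and attains a unique minimizer û*(x, v), which satisfies û*(x, v) ∈ U and A x + B û*(x, v) ∈ C_inv. Consequently, any closed-loop trajectory x_{k+1} = A x_k + B û*(x_k, v_k) starting from x_0 ∈ C_inv satisfies x_k ∈ C_inv and û*(x_k, v_k) ∈ U for all k ≥ 0, i.e., the projection problem remains feasible at all times. -/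
open Finset Matrix

lemma proj_unique_min {n : ℕ} (K : Set (EuclideanSpace ℝ (Fin n)))
    (hne : K.Nonempty) (hcl : IsClosed K) (hconv : Convex ℝ K)
    (v : EuclideanSpace ℝ (Fin n)) :
    ∃ w ∈ K, ∀ u ∈ K, u ≠ w → ‖v - w‖ < ‖v - u‖ := by
  obtain ⟨w, hwK, hw⟩ :=
    exists_norm_eq_iInf_of_complete_convex hne hcl.isComplete hconv v
  refine ⟨w, hwK, fun u huK hneq => ?_⟩
  have hbdd : BddBelow (Set.range fun w : K => ‖v - w‖) :=
    ⟨0, by rintro r ⟨z, rfl⟩; exact norm_nonneg _⟩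
  have hle : ‖v - w‖ ≤ ‖v - u‖ := hw ▸ ciInf_le hbdd (⟨u, huK⟩ : K)
  rcases lt_or_eq_of_le hle with h | h
  · exact h
  · exfalso
    have hu : ‖v - u‖ = ⨅ w : K, ‖v - w‖ := by rw [← h, hw]
    have h1 := (norm_eq_iInf_iff_real_inner_le_zero hconv hwK).mp hw u huK
    have h2 := (norm_eq_iInf_iff_real_inner_le_zero hconv huK).mp hu w hwK
    have key : inner ℝ (v - w) (u - w) + inner ℝ (v - u) (w - u) = (‖u - w‖ : ℝ) ^ 2 := by
      have h3 : (w - u : EuclideanSpace ℝ (Fin n)) = -(u - w) := by abel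
      rw [h3, inner_neg_right, ← sub_eq_add_neg, ← inner_sub_left]
      have h4 : (v - w - (v - u) : EuclideanSpace ℝ (Fin n)) = u - w := by abel
      rw [h4, real_inner_self_eq_norm_sq]
    have h5 : (‖u - w‖ : ℝ) ^ 2 ≤ 0 := key ▸ add_nonpos h1 h2
    have h6 : (u - w : EuclideanSpace ℝ (Fin n)) = 0 := by
      have := norm_nonneg (u - w : EuclideanSpace ℝ (Fin n))
      have : ‖u - w‖ = 0 := by nlinarith
      exact norm_eq_zero.mp this
    exact hneq (sub_eq_zero.mp h6)

/-- feasibility recovery by projection onto a control invariant set keeps the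
closed loop inside the invariant set and the inputs feasible at all times. -/
theorem projection_feasibility_recovery (nx nu qu qi : ℕ)
    (A : Matrix (Fin nx) (Fin nx) ℝ) (B : Matrix (Fin nx) (Fin nu) ℝ)
    (Cu : Matrix (Fin qu) (Fin nu) ℝ) (cu : Fin qu → ℝ)
    (Ci : Matrix (Fin qi) (Fin nx) ℝ) (ci : Fin qi → ℝ)
    (U : Set (Fin nu → ℝ)) (hU : U = {u | ∀ i, (Cu *ᵥ u) i ≤ cu i})
    (Cinv : Set (Fin nx → ℝ)) (hCinv : Cinv = {x | ∀ i, (Ci *ᵥ x) i ≤ ci i})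
    (hne : Cinv.Nonempty) (hbdd : Bornology.IsBounded Cinv)
    (hinv : ∀ x ∈ Cinv, ∃ u ∈ U, A *ᵥ x + B *ᵥ u ∈ Cinv) :
    ∃ ustar : (Fin nx → ℝ) → (Fin nu → ℝ) → (Fin nu → ℝ),
      (∀ x ∈ Cinv, ∀ v : Fin nu → ℝ,
        -- the projection problem is feasible
        (∃ u, u ∈ U ∧ A *ᵥ x + B *ᵥ u ∈ Cinv) ∧
        -- the minimizer is feasible
        (ustar x v ∈ U ∧ A *ᵥ x + B *ᵥ ustar x v ∈ Cinv) ∧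
        -- and it is the unique minimizer of ‖v − û‖₂²
        (∀ u, u ∈ U → A *ᵥ x + B *ᵥ u ∈ Cinv → u ≠ ustar x v →
          (∑ i, (v i - ustar x v i) ^ 2) < ∑ i, (v i - u i) ^ 2)) ∧
      -- recursive feasibility of the closed loop
      (∀ (xs : ℕ → Fin nx → ℝ) (vs : ℕ → Fin nu → ℝ),
        xs 0 ∈ Cinv →
        (∀ k, xs (k + 1) = A *ᵥ xs k + B *ᵥ ustar (xs k) (vs k)) →
        ∀ k, xs k ∈ Cinv ∧ ustar (xs k) (vs k) ∈ U) := by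
  classical
  subst hU hCinv
  have key : ∀ x, x ∈ {x | ∀ i, (Ci *ᵥ x) i ≤ ci i} → ∀ v : Fin nu → ℝ,
      ∃ w : Fin nu → ℝ,
        (w ∈ {u | ∀ i, (Cu *ᵥ u) i ≤ cu i} ∧
          A *ᵥ x + B *ᵥ w ∈ {x | ∀ i, (Ci *ᵥ x) i ≤ ci i}) ∧
        ∀ u, u ∈ {u | ∀ i, (Cu *ᵥ u) i ≤ cu i} →
          A *ᵥ x + B *ᵥ u ∈ {x | ∀ i, (Ci *ᵥ x) i ≤ ci i} → u ≠ w →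
            (∑ i, (v i - w i) ^ 2) < ∑ i, (v i - u i) ^ 2 := by
    intro x hx v
    set K : Set (EuclideanSpace ℝ (Fin nu)) :=
      {u | (∀ i, (Cu *ᵥ u) i ≤ cu i) ∧
        ∀ i, (Ci *ᵥ (A *ᵥ x + B *ᵥ (u : Fin nu → ℝ))) i ≤ ci i} with hK
    have hne : K.Nonempty := by
      obtain ⟨u, hu1, hu2⟩ := hinv x hx
      exact ⟨WithLp.toLp 2 u, hu1, hu2⟩
    have hconv : Convex ℝ K := by
      rintro u ⟨hu1, hu2⟩ w ⟨hw1, hw2⟩ a b ha hb hab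
      have hcomb : ∀ {m : ℕ} (M : Matrix (Fin m) (Fin nu) ℝ) (i : Fin m),
          (M *ᵥ ((a • u + b • w : EuclideanSpace ℝ (Fin nu)) : Fin nu → ℝ)) i
            = a * (M *ᵥ u) i + b * (M *ᵥ w) i := by
        intro m M i
        simp [Matrix.mulVec, dotProduct, Finset.mul_sum, ← Finset.sum_add_distrib,
          mul_add, smul_eq_mul]
        congr 1; ext j; ring
      constructor
      · intro i
        have := hcomb Cu i
        calc (Cu *ᵥ ((a • u + b • w : EuclideanSpace ℝ (Fin nu)) : Fin nu → ℝ)) i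
            = a * (Cu *ᵥ u) i + b * (Cu *ᵥ w) i := this
          _ ≤ cu i := by
              have hc : a * cu i + b * cu i = cu i := by rw [← add_mul, hab, one_mul]
              linarith [mul_le_mul_of_nonneg_left (hu1 i) ha,
                mul_le_mul_of_nonneg_left (hw1 i) hb]
      · intro i
        have hB := hcomb B
        have hexp : (Ci *ᵥ (A *ᵥ x + B *ᵥ ((a • u + b • w : EuclideanSpace ℝ (Fin nu)) : Fin nu → ℝ))) i
            = a * (Ci *ᵥ (A *ᵥ x + B *ᵥ u)) i + b * (Ci *ᵥ (A *ᵥ x + B *ᵥ w)) i := by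
          have h1 : (B *ᵥ ((a • u + b • w : EuclideanSpace ℝ (Fin nu)) : Fin nu → ℝ))
              = a • (B *ᵥ u) + b • (B *ᵥ w) := by
            ext j; simpa using hB j
          rw [h1]
          have h2 : (A *ᵥ x + (a • (B *ᵥ u) + b • (B *ᵥ w)))
              = a • (A *ᵥ x + B *ᵥ u) + b • (A *ᵥ x + B *ᵥ w) := by
            funext j
            simp only [Pi.add_apply, Pi.smul_apply, smul_eq_mul]
            linear_combination (-(A *ᵥ x) j) * hab
          rw [h2, Matrix.mulVec_add, Matrix.mulVec_smul, Matrix.mulVec_smul]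
          simp [smul_eq_mul]
        calc _ = a * (Ci *ᵥ (A *ᵥ x + B *ᵥ u)) i + b * (Ci *ᵥ (A *ᵥ x + B *ᵥ w)) i := hexp
          _ ≤ ci i := by
              have hc : a * ci i + b * ci i = ci i := by rw [← add_mul, hab, one_mul]
              linarith [mul_le_mul_of_nonneg_left (hu2 i) ha,
                mul_le_mul_of_nonneg_left (hw2 i) hb]
    have hcl : IsClosed K := by
      have hc1 : ∀ i : Fin qu, IsClosed {u : EuclideanSpace ℝ (Fin nu) | (Cu *ᵥ u) i ≤ cu i} := by
        intro i
        have hcont : Continuous fun u : EuclideanSpace ℝ (Fin nu) => (Cu *ᵥ (u : Fin nu → ℝ)) i := by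
          simp only [Matrix.mulVec, dotProduct]
          exact continuous_finset_sum _ fun j _ =>
            continuous_const.mul ((EuclideanSpace.proj j).continuous)
        exact isClosed_le hcont continuous_const
      have hc2 : ∀ i : Fin qi, IsClosed
          {u : EuclideanSpace ℝ (Fin nu) | (Ci *ᵥ (A *ᵥ x + B *ᵥ (u : Fin nu → ℝ))) i ≤ ci i} := by
        intro i
        have hcont : Continuous fun u : EuclideanSpace ℝ (Fin nu) =>
            (Ci *ᵥ (A *ᵥ x + B *ᵥ (u : Fin nu → ℝ))) i := by
          simp only [Matrix.mulVec, dotProduct, Pi.add_apply]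
          refine continuous_finset_sum _ fun j _ => continuous_const.mul ?_
          exact continuous_const.add (continuous_finset_sum _ fun l _ =>
            continuous_const.mul ((EuclideanSpace.proj l).continuous))
        exact isClosed_le hcont continuous_const
      have : K = (⋂ i, {u : EuclideanSpace ℝ (Fin nu) | (Cu *ᵥ u) i ≤ cu i}) ∩
          ⋂ i, {u : EuclideanSpace ℝ (Fin nu) | (Ci *ᵥ (A *ᵥ x + B *ᵥ (u : Fin nu → ℝ))) i ≤ ci i} := by
        ext u; simp [hK, Set.mem_iInter]
      rw [this]
      exact ((isClosed_iInter hc1).inter (isClosed_iInter hc2))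
    set v' : EuclideanSpace ℝ (Fin nu) := WithLp.toLp 2 v with hv'
    obtain ⟨w, hwK, hwmin⟩ := proj_unique_min K hne hcl hconv v'
    refine ⟨w, ⟨hwK.1, hwK.2⟩, fun u hu1 hu2 hneq => ?_⟩
    set u' : EuclideanSpace ℝ (Fin nu) := WithLp.toLp 2 u with hu'
    have hlt : ‖v' - w‖ < ‖v' - u'‖ := hwmin u' ⟨hu1, hu2⟩ (fun h => hneq (by rw [← h]))
    have hsq : ∀ z : EuclideanSpace ℝ (Fin nu),
        ‖v' - z‖ ^ 2 = ∑ i, (v i - z i) ^ 2 := by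
      intro z
      rw [EuclideanSpace.norm_eq, Real.sq_sqrt (by positivity)]
      simp [sq_abs, hv']
    calc (∑ i, (v i - w i) ^ 2) = ‖v' - w‖ ^ 2 := (hsq w).symm
      _ < ‖v' - u'‖ ^ 2 := by
          exact pow_lt_pow_left₀ hlt (norm_nonneg _) two_ne_zero
      _ = ∑ i, (v i - u i) ^ 2 := hsq u'
  choose! ustar hfeas hmin using key
  refine ⟨ustar, fun x hx v => ⟨hinv x hx, hfeas x hx v, hmin x hx v⟩, ?_⟩
  intro xs vs h0 hrec k
  induction k with
  | zero => exact ⟨h0, (hfeas (xs 0) h0 (vs 0)).1⟩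
  | succ k ih =>
      have hx1 : xs (k + 1) ∈ {x | ∀ i, (Ci *ᵥ x) i ≤ ci i} := by
        rw [hrec k]; exact (hfeas (xs k) ih.1 (vs k)).2
      exact ⟨hx1, (hfeas (xs (k+1)) hx1 (vs (k+1))).1⟩
end

section
/- Every continuous piecewise affine function K : ℝ^{n_x} → ℝ^{n_u} can be written componentwise as a difference of convex piecewise affine functions: there exist convex PWA functions γ_1, …, γ_{n_u} and η_1, …, η_{n_u} (each a pointwise maximum of finitely many affine functions ℝ^{n_x} → ℝ) such that K_i(x) = γ_i(x) − η_i(x) for all x ∈ ℝ^{n_x} and all i = 1, …, n_u. -/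
open Finset Matrix

section Aux

lemma exists_right_piece {r : ℕ} {F : ℝ → ℝ} (hF : Continuous F)
    (α β : Fin r → ℝ) (hcov : ∀ t, ∃ k, F t = α k * t + β k) (t0 : ℝ) :
    ∃ ε > 0, ∃ k, ∀ s ∈ Set.Icc (0:ℝ) ε, F (t0 + s) = α k * (t0 + s) + β k := by
  classical
  set C : Finset ℝ :=
    ((Finset.univ : Finset (Fin r × Fin r)).filter (fun pq => α pq.1 ≠ α pq.2)).image
      (fun pq => (β pq.2 - β pq.1) / (α pq.1 - α pq.2)) with hC
  set C' := C.filter (fun u => t0 < u) with hC'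
  obtain ⟨ε, hε, hεsep⟩ : ∃ ε > 0, ∀ u ∈ C', t0 + ε < u := by
    by_cases h : C'.Nonempty
    · have hmem := C'.min'_mem h
      have h2 : t0 < C'.min' h := (Finset.mem_filter.mp hmem).2
      refine ⟨(C'.min' h - t0)/2, by linarith, ?_⟩
      intro u hu
      have h1 : C'.min' h ≤ u := C'.min'_le u hu
      linarith
    · exact ⟨1, one_pos, fun u hu => absurd ⟨u, hu⟩ h⟩
  have key : ∀ p q : Fin r, ∀ τ, t0 < τ → τ ≤ t0 + ε →
      α p * τ + β p = α q * τ + β q → (α p = α q ∧ β p = β q) := by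
    intro p q τ hτ1 hτ2 heq
    by_cases hα : α p = α q
    · exact ⟨hα, by rw [hα] at heq; linarith⟩
    · exfalso
      have hne : α p - α q ≠ 0 := sub_ne_zero.mpr hα
      have hτval : τ = (β q - β p) / (α p - α q) := by
        rw [eq_div_iff hne]; ring_nf; nlinarith [heq]
      have hτC : τ ∈ C' := by
        rw [hC']
        refine Finset.mem_filter.mpr ⟨?_, hτ1⟩
        rw [hC]
        refine Finset.mem_image.mpr ⟨(p, q), ?_, hτval.symm⟩
        exact Finset.mem_filter.mpr ⟨Finset.mem_univ _, hα⟩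
      have := hεsep τ hτC; linarith
  -- the piece active at the right end
  obtain ⟨k, hk⟩ := hcov (t0 + ε)
  refine ⟨ε, hε, k, ?_⟩
  -- F agrees with line k on Ioc t0 (t0+ε)
  have hIoc : ∀ t ∈ Set.Ioc t0 (t0 + ε), F t = α k * t + β k := by
    set u : Set ℝ := {t | F t = α k * t + β k} with hu
    set bad : Finset (Fin r) := Finset.univ.filter (fun j => ¬(α j = α k ∧ β j = β k)) with hbad
    set v : Set ℝ := ⋃ j ∈ bad, {t | F t = α j * t + β j} with hv
    have hucl : IsClosed u := isClosed_eq hF (by continuity)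
    have hvcl : IsClosed v := by
      apply Set.Finite.isClosed_biUnion (Finset.finite_toSet bad)
      intro j _; exact isClosed_eq hF (by continuity)
    have hcover : Set.Ioc t0 (t0 + ε) ⊆ u ∪ v := by
      intro t _
      obtain ⟨j, hj⟩ := hcov t
      by_cases hgood : α j = α k ∧ β j = β k
      · left; rw [hu]; simp only [Set.mem_setOf_eq]; rw [hj, hgood.1, hgood.2]
      · right; rw [hv]; exact Set.mem_biUnion (Finset.mem_filter.mpr ⟨Finset.mem_univ _, hgood⟩) hj
    have hune : (Set.Ioc t0 (t0 + ε) ∩ u).Nonempty :=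
      ⟨t0 + ε, ⟨by constructor <;> linarith, hk⟩⟩
    by_contra hcon
    push_neg at hcon
    obtain ⟨τb, hτb, hFτb⟩ := hcon
    have hvne : (Set.Ioc t0 (t0 + ε) ∩ v).Nonempty := by
      refine ⟨τb, hτb, ?_⟩
      rcases hcover hτb with h | h
      · exact absurd h hFτb
      · exact h
    obtain ⟨τ, hτI, hτu, hτv⟩ :=
      (isPreconnected_closed_iff.mp isPreconnected_Ioc) u v hucl hvcl hcover hune hvne
    rw [hv] at hτv
    obtain ⟨j, hjbad, hτj⟩ : ∃ j ∈ bad, F τ = α j * τ + β j := by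
      simpa using hτv
    have heq : α j * τ + β j = α k * τ + β k := by
      rw [← hτj]; exact hτu
    have hgood := key j k τ hτI.1 hτI.2 heq
    exact (Finset.mem_filter.mp hjbad).2 hgood
  intro s hs
  rcases eq_or_lt_of_le hs.1 with h0 | h0
  · -- s = 0 : by continuity
    have hEq : Set.EqOn F (fun t => α k * t + β k) (Set.Ioc t0 (t0 + ε)) := hIoc
    have hcl : Set.EqOn F (fun t => α k * t + β k) (closure (Set.Ioc t0 (t0 + ε))) :=
      hEq.closure hF (by continuity)
    have : t0 + s ∈ closure (Set.Ioc t0 (t0 + ε)) := by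
      rw [closure_Ioc (by linarith : t0 ≠ t0 + ε)]
      constructor <;> linarith
    exact hcl this
  · exact hIoc _ ⟨by linarith, by linarith [hs.2]⟩


lemma exists_right_pair {r : ℕ} (α β : Fin r → ℝ) (p q : Fin r) (t0 : ℝ) :
    ∃ ε > 0, ∃ w, (w = p ∨ w = q) ∧ ∀ s ∈ Set.Icc (0:ℝ) ε,
      max (α p * (t0+s) + β p) (α q * (t0+s) + β q) = α w * (t0+s) + β w := by
  set d0 := (α p * t0 + β p) - (α q * t0 + β q) with hd0
  have habs1 := le_abs_self (α p - α q)
  have habs2 := neg_abs_le (α p - α q)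
  have habs0 := abs_nonneg (α p - α q)
  rcases lt_trichotomy d0 0 with hlt | heq | hgt
  · refine ⟨(-d0) / (|α p - α q| + 1), div_pos (by linarith) (by positivity), q, Or.inr rfl, ?_⟩
    intro s hs
    apply max_eq_right
    have h1 : |α p - α q| * s ≤ |α p - α q| * ((-d0) / (|α p - α q| + 1)) :=
      mul_le_mul_of_nonneg_left hs.2 habs0
    have h2 : |α p - α q| * ((-d0) / (|α p - α q| + 1)) < -d0 := by
      rw [mul_div_assoc']
      rw [div_lt_iff₀ (by positivity)]
      nlinarith
    nlinarith [hs.1]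
  · rcases le_total (α p) (α q) with hle | hle
    · refine ⟨1, one_pos, q, Or.inr rfl, ?_⟩
      intro s hs
      apply max_eq_right
      nlinarith [hs.1]
    · refine ⟨1, one_pos, p, Or.inl rfl, ?_⟩
      intro s hs
      apply max_eq_left
      nlinarith [hs.1]
  · refine ⟨d0 / (|α p - α q| + 1), div_pos (by linarith) (by positivity), p, Or.inl rfl, ?_⟩
    intro s hs
    apply max_eq_left
    have h1 : |α p - α q| * s ≤ |α p - α q| * (d0 / (|α p - α q| + 1)) :=
      mul_le_mul_of_nonneg_left hs.2 habs0
    have h2 : |α p - α q| * (d0 / (|α p - α q| + 1)) < d0 := by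
      rw [mul_div_assoc']
      rw [div_lt_iff₀ (by positivity)]
      nlinarith
    nlinarith [hs.1]


lemma exists_left_piece {r : ℕ} {F : ℝ → ℝ} (hF : Continuous F)
    (α β : Fin r → ℝ) (hcov : ∀ t, ∃ k, F t = α k * t + β k) (t0 : ℝ) :
    ∃ ε > 0, ∃ k, ∀ s ∈ Set.Icc (0:ℝ) ε, F (t0 - s) = α k * (t0 - s) + β k := by
  have hF' : Continuous fun t => F (2*t0 - t) := hF.comp (by continuity)
  have hcov' : ∀ t, ∃ k, F (2*t0 - t) = (-(α k)) * t + (2*t0*(α k) + β k) := by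
    intro t; obtain ⟨k, hk⟩ := hcov (2*t0 - t); exact ⟨k, by rw [hk]; ring⟩
  obtain ⟨ε, hε, k, hk⟩ := exists_right_piece hF' _ _ hcov' t0
  refine ⟨ε, hε, k, fun s hs => ?_⟩
  have h := hk s hs
  have h2 : 2*t0 - (t0 + s) = t0 - s := by ring
  rw [h2] at h
  rw [h]; ring

lemma exists_left_pair {r : ℕ} (α β : Fin r → ℝ) (p q : Fin r) (t0 : ℝ) :
    ∃ ε > 0, ∃ w, (w = p ∨ w = q) ∧ ∀ s ∈ Set.Icc (0:ℝ) ε,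
      max (α p * (t0-s) + β p) (α q * (t0-s) + β q) = α w * (t0-s) + β w := by
  obtain ⟨ε, hε, w, hw, h⟩ :=
    exists_right_pair (fun k => -(α k)) (fun k => 2*t0*(α k) + β k) p q t0
  refine ⟨ε, hε, w, hw, fun s hs => ?_⟩
  have hh := h s hs
  have e : ∀ k : Fin r, -(α k) * (t0+s) + (2*t0*(α k) + β k) = α k * (t0-s) + β k :=
    fun k => by ring
  rw [e p, e q, e w] at hh
  exact hh
set_option maxHeartbeats 1000000 in
lemma oned_chord {r : ℕ} {F : ℝ → ℝ} (hF : Continuous F) (α β : Fin r → ℝ)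
    (hcov : ∀ t, ∃ k, F t = α k * t + β k)
    {G : ℝ → ℝ}
    (hG : ∀ t, G t = F t + ∑ pq : Fin r × Fin r,
        max (α pq.1 * t + β pq.1) (α pq.2 * t + β pq.2))
    {a b : ℝ} (hab : a < b) :
    ∀ u, a ≤ u → u ≤ b → (b - a) * G u ≤ (b - u) * G a + (u - a) * G b := by
  classical
  by_contra hcon
  push_neg at hcon
  obtain ⟨u0, hu0a, hu0b, hu0⟩ := hcon
  -- r = 0 is impossible
  rcases Nat.eq_zero_or_pos r with hr | hr
  · subst hr; obtain ⟨k, _⟩ := hcov 0; exact k.elim0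
  have hGcont : Continuous G := by
    have : G = fun t => F t + ∑ pq : Fin r × Fin r,
        max (α pq.1 * t + β pq.1) (α pq.2 * t + β pq.2) := funext hG
    rw [this]
    apply hF.add
    apply continuous_finset_sum
    intro pq _
    exact Continuous.max ((continuous_const.mul continuous_id).add continuous_const) ((continuous_const.mul continuous_id).add continuous_const)
  have hba : b - a ≠ 0 := ne_of_gt (by linarith)
  set m := (G b - G a) / (b - a) with hm
  have hm' : m * (b - a) = G b - G a := div_mul_cancel₀ _ hba
  set D : ℝ → ℝ := fun u => G u - (G a + m * (u - a)) with hD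
  have hDcont : Continuous D := by
    exact hGcont.sub (continuous_const.add (continuous_const.mul (continuous_id.sub continuous_const)))
  have hDa : D a = 0 := by simp [hD]
  have hDb : D b = 0 := by simp only [hD]; nlinarith [hm']
  have hDu0 : 0 < D u0 := by
    have h1 : 0 < (b - a) * D u0 := by simp only [hD]; nlinarith [hm']
    nlinarith
  obtain ⟨tm, htmI, htm⟩ := (isCompact_Icc (a := a) (b := b)).exists_isMaxOn
    ⟨a, le_refl a, le_of_lt hab⟩ hDcont.continuousOn
  set M := D tm with hMdef
  have hge : ∀ u, a ≤ u → u ≤ b → D u ≤ M := fun u h1 h2 => htm ⟨h1, h2⟩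
  have hM : 0 < M := lt_of_lt_of_le hDu0 (hge u0 hu0a hu0b)
  set S := Set.Icc a b ∩ {u | D u = M} with hS
  have hScl : IsClosed S := isClosed_Icc.inter (isClosed_eq hDcont continuous_const)
  have hSne : S.Nonempty := ⟨tm, htmI, rfl⟩
  have hSbdd : BddAbove S := (isCompact_Icc.bddAbove).mono Set.inter_subset_left
  set t1 := sSup S with ht1
  have ht1S : t1 ∈ S := hScl.csSup_mem hSne hSbdd
  have ht1I : t1 ∈ Set.Icc a b := ht1S.1
  have hDt1 : D t1 = M := ht1S.2
  have ht1a : a < t1 := by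
    rcases eq_or_lt_of_le ht1I.1 with h | h
    · rw [← h, hDa] at hDt1; linarith
    · exact h
  have ht1b : t1 < b := by
    rcases eq_or_lt_of_le ht1I.2 with h | h
    · rw [h, hDb] at hDt1; linarith
    · exact h
  have hlt : ∀ u, t1 < u → u ≤ b → D u < M := by
    intro u h1 h2
    have hle : D u ≤ M := hge u (by linarith) h2
    rcases eq_or_lt_of_le hle with h | h
    · exfalso
      have : u ∈ S := ⟨⟨by linarith, h2⟩, h⟩
      have := le_csSup hSbdd this
      linarith
    · exact h
  -- right-side structure at t1
  obtain ⟨εF, hεF, k, hkF⟩ := exists_right_piece hF α β hcov t1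
  have hpairR := fun pq : Fin r × Fin r => exists_right_pair α β pq.1 pq.2 t1
  choose εR hεRpos wR hwRmem hwR using hpairR
  -- left-side structure at t1
  obtain ⟨εFl, hεFl, j, hjF⟩ := exists_left_piece hF α β hcov t1
  have hpairL := fun pq : Fin r × Fin r => exists_left_pair α β pq.1 pq.2 t1
  choose εL hεLpos uL huLmem huL using hpairL
  have hPne : (Finset.univ : Finset (Fin r × Fin r)).Nonempty :=
    ⟨(⟨0, hr⟩, ⟨0, hr⟩), mem_univ _⟩
  set εr := min (min εF (b - t1)) (Finset.univ.inf' hPne εR) with hεr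
  have hεrpos : 0 < εr := by
    apply lt_min (lt_min hεF (by linarith))
    rw [Finset.lt_inf'_iff]
    intro i _; exact hεRpos i
  have hεrF : εr ≤ εF := le_trans (min_le_left _ _) (min_le_left _ _)
  have hεrb : εr ≤ b - t1 := le_trans (min_le_left _ _) (min_le_right _ _)
  have hεrR : ∀ pq, εr ≤ εR pq := fun pq =>
    le_trans (min_le_right _ _) (Finset.inf'_le _ (mem_univ pq))
  set εl := min (min εFl (t1 - a)) (Finset.univ.inf' hPne εL) with hεl
  have hεlpos : 0 < εl := by
    apply lt_min (lt_min hεFl (by linarith))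
    rw [Finset.lt_inf'_iff]
    intro i _; exact hεLpos i
  have hεlF : εl ≤ εFl := le_trans (min_le_left _ _) (min_le_left _ _)
  have hεla : εl ≤ t1 - a := le_trans (min_le_left _ _) (min_le_right _ _)
  have hεlL : ∀ pq, εl ≤ εL pq := fun pq =>
    le_trans (min_le_right _ _) (Finset.inf'_le _ (mem_univ pq))
  -- value formulas
  have hsumaux : ∀ (w : Fin r × Fin r → Fin r) (t : ℝ),
      ∑ pq, (α (w pq) * t + β (w pq)) = (∑ pq, α (w pq)) * t + ∑ pq, β (w pq) := by
    intro w t; rw [Finset.sum_add_distrib, Finset.sum_mul]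
  have hGvalR : ∀ s ∈ Set.Icc (0:ℝ) εr,
      G (t1 + s) = (α k * (t1+s) + β k) + ((∑ pq, α (wR pq)) * (t1+s) + ∑ pq, β (wR pq)) := by
    intro s hs
    rw [hG]
    rw [hkF s ⟨hs.1, le_trans hs.2 hεrF⟩, ← hsumaux]
    congr 1
    apply Finset.sum_congr rfl
    intro pq _
    exact hwR pq s ⟨hs.1, le_trans hs.2 (hεrR pq)⟩
  have hGvalL : ∀ s ∈ Set.Icc (0:ℝ) εl,
      G (t1 - s) = (α j * (t1-s) + β j) + ((∑ pq, α (uL pq)) * (t1-s) + ∑ pq, β (uL pq)) := by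
    intro s hs
    rw [hG]
    rw [hjF s ⟨hs.1, le_trans hs.2 hεlF⟩, ← hsumaux]
    congr 1
    apply Finset.sum_congr rfl
    intro pq _
    exact huL pq s ⟨hs.1, le_trans hs.2 (hεlL pq)⟩
  set AR := α k + ∑ pq, α (wR pq) with hAR
  set AL := α j + ∑ pq, α (uL pq) with hAL
  have hG0R : G t1 = (α k * t1 + β k) + ((∑ pq, α (wR pq)) * t1 + ∑ pq, β (wR pq)) := by
    have := hGvalR 0 ⟨le_refl 0, le_of_lt hεrpos⟩
    rw [add_zero] at this; exact this
  have hG0L : G t1 = (α j * t1 + β j) + ((∑ pq, α (uL pq)) * t1 + ∑ pq, β (uL pq)) := by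
    have := hGvalL 0 ⟨le_refl 0, le_of_lt hεlpos⟩
    rw [sub_zero] at this; exact this
  -- slope inequalities versus m
  have hARm : AR < m := by
    have h1 : D (t1 + εr) < M := hlt _ (by linarith) (by linarith)
    have h2 : G (t1 + εr) = G t1 + AR * εr := by
      rw [hGvalR εr ⟨le_of_lt hεrpos, le_refl εr⟩, hG0R, hAR]; ring
    have h3 : D (t1 + εr) - D t1 = (AR - m) * εr := by
      simp only [hD]; rw [h2]; ring
    have h4 : (AR - m) * εr < 0 := by rw [← h3]; linarith [hDt1]
    by_contra hx
    push_neg at hx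
    have : 0 ≤ (AR - m) * εr := mul_nonneg (by linarith) (le_of_lt hεrpos)
    linarith
  have hALm : m ≤ AL := by
    have h1 : D (t1 - εl) ≤ M := hge _ (by linarith) (by linarith)
    have h2 : G (t1 - εl) = G t1 - AL * εl := by
      rw [hGvalL εl ⟨le_of_lt hεlpos, le_refl εl⟩, hG0L, hAL]; ring
    have h3 : D t1 - D (t1 - εl) = (AL - m) * εl := by
      simp only [hD]; rw [h2]; ring
    have h4 : 0 ≤ (AL - m) * εl := by rw [← h3]; linarith [hDt1]
    by_contra hx
    push_neg at hx
    have : (AL - m) * εl < 0 := mul_neg_of_neg_of_pos (by linarith) hεlpos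
    linarith
  -- slope comparison : AL ≤ AR
  have hFt1R : F t1 = α k * t1 + β k := by
    have := hkF 0 ⟨le_refl 0, le_of_lt hεF⟩; rw [add_zero] at this; exact this
  have hFt1L : F t1 = α j * t1 + β j := by
    have := hjF 0 ⟨le_refl 0, le_of_lt hεFl⟩; rw [sub_zero] at this; exact this
  -- each pair term : α (uL pq) ≤ α (wR pq)
  have hterm : ∀ pq : Fin r × Fin r, α (uL pq) ≤ α (wR pq) := by
    intro pq
    have e0R : α (wR pq) * t1 + β (wR pq)
        = max (α pq.1 * t1 + β pq.1) (α pq.2 * t1 + β pq.2) := by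
      have := hwR pq 0 ⟨le_refl 0, le_of_lt (hεRpos pq)⟩
      rw [add_zero] at this; exact this.symm
    have e0L : α (uL pq) * t1 + β (uL pq)
        = max (α pq.1 * t1 + β pq.1) (α pq.2 * t1 + β pq.2) := by
      have := huL pq 0 ⟨le_refl 0, le_of_lt (hεLpos pq)⟩
      rw [sub_zero] at this; exact this.symm
    have e0 : α (uL pq) * t1 + β (uL pq) = α (wR pq) * t1 + β (wR pq) := by
      rw [e0L, e0R]
    have hle : α (uL pq) * (t1 + εr) + β (uL pq) ≤ α (wR pq) * (t1 + εr) + β (wR pq) := by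
      have hmax := hwR pq εr ⟨le_of_lt hεrpos, hεrR pq⟩
      rw [← hmax]
      rcases huLmem pq with h | h
      · rw [h]; exact le_max_left _ _
      · rw [h]; exact le_max_right _ _
    have e1 : α (uL pq) * (t1 + εr) = α (uL pq) * t1 + α (uL pq) * εr := by ring
    have e2 : α (wR pq) * (t1 + εr) = α (wR pq) * t1 + α (wR pq) * εr := by ring
    have h6 : α (uL pq) * εr ≤ α (wR pq) * εr := by linarith [e0, hle]
    exact (mul_le_mul_iff_left₀ hεrpos).mp h6
  -- the special pair (j, k)
  have hspec : α j - α k ≤ α (wR (j, k)) - α (uL (j, k)) := by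
    have hjk : α j * t1 + β j = α k * t1 + β k := by rw [← hFt1L, hFt1R]
    have hmax0 : max (α j * t1 + β j) (α k * t1 + β k) = α j * t1 + β j := by
      rw [hjk]; simp
    have e0R : α (wR (j, k)) * t1 + β (wR (j, k)) = α j * t1 + β j := by
      have := hwR (j, k) 0 ⟨le_refl 0, le_of_lt (hεRpos (j, k))⟩
      rw [add_zero] at this
      rw [← this]; exact hmax0
    have e0L : α (uL (j, k)) * t1 + β (uL (j, k)) = α k * t1 + β k := by
      have := huL (j, k) 0 ⟨le_refl 0, le_of_lt (hεLpos (j, k))⟩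
      rw [sub_zero] at this
      rw [← this, hmax0, hjk]
    -- α j ≤ α (wR (j,k))
    have h1 : α j ≤ α (wR (j, k)) := by
      have hmax := hwR (j, k) εr ⟨le_of_lt hεrpos, hεrR (j, k)⟩
      have hle : α j * (t1 + εr) + β j ≤ α (wR (j, k)) * (t1 + εr) + β (wR (j, k)) := by
        rw [← hmax]; exact le_max_left _ _
      have e1 : α j * (t1 + εr) = α j * t1 + α j * εr := by ring
      have e2 : α (wR (j, k)) * (t1 + εr) = α (wR (j, k)) * t1 + α (wR (j, k)) * εr := by ring
      have h6 : α j * εr ≤ α (wR (j, k)) * εr := by linarith [e0R, hle]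
      exact (mul_le_mul_iff_left₀ hεrpos).mp h6
    -- α (uL (j,k)) ≤ α k
    have h2 : α (uL (j, k)) ≤ α k := by
      have hmax := huL (j, k) εl ⟨le_of_lt hεlpos, hεlL (j, k)⟩
      have hle : α k * (t1 - εl) + β k ≤ α (uL (j, k)) * (t1 - εl) + β (uL (j, k)) := by
        rw [← hmax]; exact le_max_right _ _
      have e1 : α k * (t1 - εl) = α k * t1 - α k * εl := by ring
      have e2 : α (uL (j, k)) * (t1 - εl) = α (uL (j, k)) * t1 - α (uL (j, k)) * εl := by ring
      have h6 : α (uL (j, k)) * εl ≤ α k * εl := by linarith [e0L, hle]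
      exact (mul_le_mul_iff_left₀ hεlpos).mp h6
    linarith
  have hsumge : (∑ pq, α (wR pq)) - (∑ pq, α (uL pq)) ≥ α j - α k := by
    have h1 : ∑ pq, (α (wR pq) - α (uL pq))
        ≥ α (wR (j, k)) - α (uL (j, k)) := by
      apply Finset.single_le_sum (f := fun pq => α (wR pq) - α (uL pq))
      · intro i _; linarith [hterm i]
      · exact mem_univ (j, k)
    rw [Finset.sum_sub_distrib] at h1
    linarith
  have : AL ≤ AR := by rw [hAR, hAL]; linarith
  linarith

open Finset in
lemma cont_sup' {ι X : Type*} [TopologicalSpace X] (s : Finset ι) (hs : s.Nonempty)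
    (g : ι → X → ℝ) (hg : ∀ i, Continuous (g i)) :
    Continuous fun x => s.sup' hs fun i => g i x := by
  induction hs using Finset.Nonempty.cons_induction with
  | singleton a => simpa using hg a
  | cons a s ha hne ih =>
      have heq : (fun x => (Finset.cons a s ha).sup' (Finset.cons_nonempty ha) fun i => g i x)
          = fun x => max (g a x) (s.sup' hne fun i => g i x) :=
        funext fun x => Finset.sup'_cons hne (fun i => g i x)
      rw [heq]
      exact (hg a).max ih

/-- scalar affine function -/
noncomputable def affS {n : ℕ} (a : Fin n → ℝ) (c : ℝ) (x : Fin n → ℝ) : ℝ :=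
  (∑ j, a j * x j) + c

lemma affS_cont {n : ℕ} (a : Fin n → ℝ) (c : ℝ) : Continuous (affS a c) := by
  unfold affS
  exact (continuous_finset_sum _ fun j _ =>
    continuous_const.mul (continuous_apply j)).add continuous_const

lemma affS_path {n : ℕ} (d : Fin n → ℝ) (e : ℝ) (x y : Fin n → ℝ) (t : ℝ) :
    affS d e (x + t • (y - x)) = (∑ j, d j * (y j - x j)) * t + affS d e x := by
  unfold affS
  have h1 : ∀ j, d j * (x + t • (y - x)) j = d j * (y j - x j) * t + d j * x j := by
    intro j
    simp only [Pi.add_apply, Pi.smul_apply, Pi.sub_apply, smul_eq_mul]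
    ring
  rw [Finset.sum_congr rfl fun j _ => h1 j, Finset.sum_add_distrib, ← Finset.sum_mul]
  ring

lemma affS_path' {n : ℕ} (d : Fin n → ℝ) (e : ℝ) (x y : Fin n → ℝ) (t : ℝ) :
    affS d e (x + t • (y - x)) = (1 - t) * affS d e x + t * affS d e y := by
  rw [affS_path]
  unfold affS
  have : ∑ j, d j * (y j - x j) = (∑ j, d j * y j) - ∑ j, d j * x j := by
    rw [← Finset.sum_sub_distrib]
    exact Finset.sum_congr rfl fun j _ => by ring
  rw [this]; ring

/-- the convexification term -/
noncomputable def etaF {n r : ℕ} (a : Fin r → Fin n → ℝ) (c : Fin r → ℝ)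
    (x : Fin n → ℝ) : ℝ :=
  ∑ pq : Fin r × Fin r, max (affS (a pq.1) (c pq.1) x) (affS (a pq.2) (c pq.2) x)

lemma etaF_cont {n r : ℕ} (a : Fin r → Fin n → ℝ) (c : Fin r → ℝ) :
    Continuous (etaF a c) := by
  unfold etaF
  exact continuous_finset_sum _ fun pq _ => (affS_cont _ _).max (affS_cont _ _)

lemma path_cont {n : ℕ} (x y : Fin n → ℝ) :
    Continuous fun t : ℝ => x + t • (y - x) :=
  continuous_const.add (continuous_id.smul continuous_const)

/-- convexity of `f + etaF` -/
lemma gamma_convex {n r : ℕ} {f : (Fin n → ℝ) → ℝ} (hf : Continuous f)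
    (a : Fin r → Fin n → ℝ) (c : Fin r → ℝ)
    (hcov : ∀ x, ∃ k, f x = affS (a k) (c k) x)
    (x y : Fin n → ℝ) (t : ℝ) (ht0 : 0 ≤ t) (ht1 : t ≤ 1) :
    f (x + t • (y - x)) + etaF a c (x + t • (y - x))
      ≤ (1 - t) * (f x + etaF a c x) + t * (f y + etaF a c y) := by
  set F : ℝ → ℝ := fun s => f (x + s • (y - x)) with hF
  have hFc : Continuous F := hf.comp (path_cont x y)
  set α : Fin r → ℝ := fun k => ∑ j, a k j * (y j - x j) with hα
  set β : Fin r → ℝ := fun k => affS (a k) (c k) x with hβ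
  have hcov1d : ∀ s, ∃ k, F s = α k * s + β k := by
    intro s
    obtain ⟨k, hk⟩ := hcov (x + s • (y - x))
    exact ⟨k, by rw [hF]; simp only; rw [hk, affS_path]⟩
  set G : ℝ → ℝ := fun s => F s + ∑ pq : Fin r × Fin r,
      max (α pq.1 * s + β pq.1) (α pq.2 * s + β pq.2) with hG
  have hGdef : ∀ s, G s = F s + ∑ pq : Fin r × Fin r,
      max (α pq.1 * s + β pq.1) (α pq.2 * s + β pq.2) := fun s => rfl
  have hchord := oned_chord hFc α β hcov1d hGdef (by norm_num : (0:ℝ) < 1) t ht0 ht1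
  have hGpath : ∀ s : ℝ, G s = f (x + s • (y - x)) + etaF a c (x + s • (y - x)) := by
    intro s
    rw [hGdef, hF]
    unfold etaF
    congr 1
    apply Finset.sum_congr rfl
    intro pq _
    rw [affS_path (a pq.1), affS_path (a pq.2)]
  have hG0 : G 0 = f x + etaF a c x := by
    have := hGpath 0
    simpa using this
  have hG1 : G 1 = f y + etaF a c y := by
    have h1 : x + (1:ℝ) • (y - x) = y := by
      rw [one_smul]; abel
    have := hGpath 1
    rw [h1] at this
    exact this
  rw [← hGpath t, ← hG0, ← hG1]
  have := hchord
  linarith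
/-- a local affine minorant of a convex function touching at a point is global -/
lemma affine_le_of_local {n : ℕ} (γ : (Fin n → ℝ) → ℝ)
    (hconv : ∀ x y : Fin n → ℝ, ∀ t : ℝ, 0 ≤ t → t ≤ 1 →
       γ (x + t • (y - x)) ≤ (1 - t) * γ x + t * γ y)
    (d : Fin n → ℝ) (e : ℝ) {V : Set (Fin n → ℝ)} (hV : IsOpen V)
    {x : Fin n → ℝ} (hx : x ∈ V)
    (hloc : ∀ z ∈ V, affS d e z ≤ γ z) (heq : affS d e x = γ x) :
    ∀ y, affS d e y ≤ γ y := by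
  intro y
  have hc : ContinuousAt (fun t : ℝ => x + t • (y - x)) 0 := (path_cont x y).continuousAt
  have hmem : V ∈ nhds ((fun t : ℝ => x + t • (y - x)) 0) := by
    refine hV.mem_nhds ?_
    simpa using hx
  have hpre : (fun t : ℝ => x + t • (y - x)) ⁻¹' V ∈ nhds (0:ℝ) := hc hmem
  obtain ⟨δ, hδ, hball⟩ := Metric.mem_nhds_iff.mp hpre
  set t := min (δ/2) 1 with ht
  have htpos : 0 < t := lt_min (by linarith) one_pos
  have htle : t ≤ 1 := min_le_right _ _
  have htV : x + t • (y - x) ∈ V := by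
    apply hball
    rw [Metric.mem_ball, Real.dist_eq, sub_zero, abs_of_pos htpos]
    have : t ≤ δ/2 := min_le_left _ _
    linarith
  have h1 : affS d e (x + t • (y - x)) ≤ γ (x + t • (y - x)) := hloc _ htV
  have h2 : γ (x + t • (y - x)) ≤ (1 - t) * γ x + t * γ y := hconv x y t (le_of_lt htpos) htle
  rw [affS_path'] at h1
  rw [heq] at h1
  have h3 : t * affS d e y ≤ t * γ y := by linarith
  exact (mul_le_mul_iff_right₀ htpos).mp h3

lemma dense_interiors {n r : ℕ} {f : (Fin n → ℝ) → ℝ} (hf : Continuous f)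
    (a : Fin r → Fin n → ℝ) (c : Fin r → ℝ)
    (hcov : ∀ x, ∃ k, f x = affS (a k) (c k) x) :
    Dense (⋃ k, interior {x | f x = affS (a k) (c k) x}) := by
  apply dense_iUnion_interior_of_closed
  · intro k; exact isClosed_eq hf (affS_cont _ _)
  · rw [Set.eq_univ_iff_forall]
    intro x
    obtain ⟨k, hk⟩ := hcov x
    exact Set.mem_iUnion.mpr ⟨k, hk⟩

/-- reindexing a finite sup of affine functions by `Fin (N+1)` -/
lemma sup'_to_finMax {n : ℕ} {ι : Type} [Fintype ι] [DecidableEq ι] (s : Finset ι)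
    (hs : s.Nonempty) (A : ι → Fin n → ℝ) (C : ι → ℝ) :
    ∃ (N : ℕ) (A' : Fin (N+1) → Fin n → ℝ) (C' : Fin (N+1) → ℝ),
      ∀ x, s.sup' hs (fun i => affS (A i) (C i) x)
         = finMax (Nat.succ_pos N) (fun t => affS (A' t) (C' t) x) := by
  classical
  obtain ⟨N, hcard⟩ : ∃ N, s.card = N + 1 :=
    ⟨s.card - 1, (Nat.succ_pred_eq_of_pos (Finset.card_pos.mpr hs)).symm⟩
  set e := s.equivFin with he
  refine ⟨N, fun t => A (e.symm (Fin.cast hcard.symm t)).1,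
    fun t => C (e.symm (Fin.cast hcard.symm t)).1, fun x => ?_⟩
  apply le_antisymm
  · apply Finset.sup'_le
    intro i hi
    have : affS (A i) (C i) x
        = affS (A (e.symm (Fin.cast hcard.symm (Fin.cast hcard (e ⟨i, hi⟩)))).1)
               (C (e.symm (Fin.cast hcard.symm (Fin.cast hcard (e ⟨i, hi⟩)))).1) x := by
      simp
    rw [this]
    exact Finset.le_sup' (f := fun t => affS (A (e.symm (Fin.cast hcard.symm t)).1)
      (C (e.symm (Fin.cast hcard.symm t)).1) x) (Finset.mem_univ (Fin.cast hcard (e ⟨i, hi⟩)))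
  · apply Finset.sup'_le
    intro t _
    exact Finset.le_sup' (f := fun i => affS (A i) (C i) x)
      (e.symm (Fin.cast hcard.symm t)).2
noncomputable def Asel {n r : ℕ} (a : Fin r → Fin n → ℝ) (cB : Fin r × Fin r → Bool) :
    Fin n → ℝ :=
  fun j => ∑ pq : Fin r × Fin r, (if cB pq then a pq.1 j else a pq.2 j)

noncomputable def Csel {r : ℕ} (c : Fin r → ℝ) (cB : Fin r × Fin r → Bool) : ℝ :=
  ∑ pq : Fin r × Fin r, (if cB pq then c pq.1 else c pq.2)

lemma sel_eval {n r : ℕ} (a : Fin r → Fin n → ℝ) (c : Fin r → ℝ)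
    (cB : Fin r × Fin r → Bool) (x : Fin n → ℝ) :
    affS (Asel a cB) (Csel c cB) x
      = ∑ pq : Fin r × Fin r,
          (if cB pq then affS (a pq.1) (c pq.1) x else affS (a pq.2) (c pq.2) x) := by
  unfold affS Asel Csel
  simp only [Finset.sum_mul]
  rw [Finset.sum_comm, ← Finset.sum_add_distrib]
  apply Finset.sum_congr rfl
  intro pq _
  by_cases h : cB pq <;> simp [h, affS]

lemma sel_le {n r : ℕ} (a : Fin r → Fin n → ℝ) (c : Fin r → ℝ)
    (cB : Fin r × Fin r → Bool) (x : Fin n → ℝ) :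
    (∑ pq : Fin r × Fin r,
       (if cB pq then affS (a pq.1) (c pq.1) x else affS (a pq.2) (c pq.2) x))
      ≤ etaF a c x := by
  unfold etaF
  apply Finset.sum_le_sum
  intro pq _
  by_cases h : cB pq
  · simp only [h, if_true]; exact le_max_left _ _
  · simp only [h, if_false]; exact le_max_right _ _

lemma sel_argmax {n r : ℕ} (a : Fin r → Fin n → ℝ) (c : Fin r → ℝ) (x : Fin n → ℝ) :
    ∃ cB : Fin r × Fin r → Bool,
      (∑ pq : Fin r × Fin r,
        (if cB pq then affS (a pq.1) (c pq.1) x else affS (a pq.2) (c pq.2) x))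
       = etaF a c x := by
  classical
  refine ⟨fun pq => decide (affS (a pq.2) (c pq.2) x ≤ affS (a pq.1) (c pq.1) x), ?_⟩
  unfold etaF
  apply Finset.sum_congr rfl
  intro pq _
  rcases le_total (affS (a pq.2) (c pq.2) x) (affS (a pq.1) (c pq.1) x) with h | h
  · simp [h, max_eq_left h]
  · rcases eq_or_lt_of_le h with he | hl
    · simp [he]
    · have : ¬ (affS (a pq.2) (c pq.2) x ≤ affS (a pq.1) (c pq.1) x) := not_le.mpr hl
      simp [this, max_eq_right h]
lemma affS_add {n : ℕ} (d1 d2 : Fin n → ℝ) (e1 e2 : ℝ) (x : Fin n → ℝ) :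
    affS (fun j => d1 j + d2 j) (e1 + e2) x = affS d1 e1 x + affS d2 e2 x := by
  unfold affS
  rw [Finset.sum_congr rfl fun j (_ : j ∈ Finset.univ) => add_mul (d1 j) (d2 j) (x j),
    Finset.sum_add_distrib]
  ring

lemma eta_rep {n r : ℕ} (a : Fin r → Fin n → ℝ) (c : Fin r → ℝ) :
    ∃ (M : ℕ) (Aη : Fin (M+1) → Fin n → ℝ) (Cη : Fin (M+1) → ℝ),
      ∀ x, etaF a c x = finMax (Nat.succ_pos M) (fun t => affS (Aη t) (Cη t) x) := by
  classical
  have hne : (Finset.univ : Finset ((Fin r × Fin r) → Bool)).Nonempty :=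
    ⟨fun _ => true, Finset.mem_univ _⟩
  obtain ⟨M, Aη, Cη, hrep⟩ := sup'_to_finMax Finset.univ hne
    (fun cB => Asel a cB) (fun cB => Csel c cB)
  refine ⟨M, Aη, Cη, fun x => ?_⟩
  rw [← hrep x]
  apply le_antisymm
  · obtain ⟨cB, hcB⟩ := sel_argmax a c x
    rw [← hcB, ← sel_eval]
    exact Finset.le_sup' (f := fun cB => affS (Asel a cB) (Csel c cB) x)
      (Finset.mem_univ cB)
  · apply Finset.sup'_le
    intro cB _
    rw [sel_eval]
    exact sel_le a c cB x

lemma gamma_rep {n r : ℕ} {f : (Fin n → ℝ) → ℝ} (hf : Continuous f)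
    (a : Fin r → Fin n → ℝ) (c : Fin r → ℝ)
    (hcov : ∀ x, ∃ k, f x = affS (a k) (c k) x) :
    ∃ (N : ℕ) (Aγ : Fin (N+1) → Fin n → ℝ) (Cγ : Fin (N+1) → ℝ),
      ∀ x, f x + etaF a c x = finMax (Nat.succ_pos N) (fun t => affS (Aγ t) (Cγ t) x) := by
  classical
  set γ : (Fin n → ℝ) → ℝ := fun x => f x + etaF a c x with hγ
  have hγc : Continuous γ := hf.add (etaF_cont a c)
  have hconv : ∀ x y : Fin n → ℝ, ∀ t : ℝ, 0 ≤ t → t ≤ 1 →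
      γ (x + t • (y - x)) ≤ (1 - t) * γ x + t * γ y :=
    fun x y t h0 h1 => gamma_convex hf a c hcov x y t h0 h1
  set Acand : (Fin r × ((Fin r × Fin r) → Bool)) → Fin n → ℝ :=
    fun kc j => a kc.1 j + Asel a kc.2 j with hAcand
  set Ccand : (Fin r × ((Fin r × Fin r) → Bool)) → ℝ :=
    fun kc => c kc.1 + Csel c kc.2 with hCcand
  have hcand : ∀ kc x, affS (Acand kc) (Ccand kc) x
      = affS (a kc.1) (c kc.1) x + affS (Asel a kc.2) (Csel c kc.2) x :=
    fun kc x => affS_add _ _ _ _ x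
  set GS : Finset (Fin r × ((Fin r × Fin r) → Bool)) :=
    Finset.univ.filter (fun kc => ∀ y, affS (Acand kc) (Ccand kc) y ≤ γ y) with hGS
  have hU : Dense (⋃ k, interior {x | f x = affS (a k) (c k) x}) :=
    dense_interiors hf a c hcov
  have key : ∀ x ∈ (⋃ k, interior {x | f x = affS (a k) (c k) x}),
      ∃ kc ∈ GS, affS (Acand kc) (Ccand kc) x = γ x := by
    intro x hx
    obtain ⟨k, hk⟩ := Set.mem_iUnion.mp hx
    obtain ⟨cB, hcB⟩ := sel_argmax a c x
    have hloc : ∀ z ∈ interior {x | f x = affS (a k) (c k) x},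
        affS (Acand (k, cB)) (Ccand (k, cB)) z ≤ γ z := by
      intro z hz
      have hz0 : z ∈ {x | f x = affS (a k) (c k) x} := interior_subset hz
      have hz' : f z = affS (a k) (c k) z := hz0
      rw [hcand, hγ]
      simp only
      rw [← hz']
      have := sel_le a c cB z
      rw [← sel_eval] at this
      linarith
    have heq : affS (Acand (k, cB)) (Ccand (k, cB)) x = γ x := by
      have hx0 : x ∈ {x | f x = affS (a k) (c k) x} := interior_subset hk
      have hx' : f x = affS (a k) (c k) x := hx0
      rw [hcand, hγ]
      simp only
      rw [← hx', sel_eval, hcB]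
    have hglob := affine_le_of_local γ hconv (Acand (k, cB)) (Ccand (k, cB))
      isOpen_interior hk hloc heq
    exact ⟨(k, cB), Finset.mem_filter.mpr ⟨Finset.mem_univ _, hglob⟩, heq⟩
  have hGSne : GS.Nonempty := by
    obtain ⟨x, hx⟩ := hU.nonempty
    obtain ⟨kc, hkc, -⟩ := key x hx
    exact ⟨kc, hkc⟩
  have hMc : Continuous fun x => GS.sup' hGSne fun kc => affS (Acand kc) (Ccand kc) x :=
    cont_sup' GS hGSne _ (fun kc => affS_cont _ _)
  have hfuneq : γ = fun x => GS.sup' hGSne fun kc => affS (Acand kc) (Ccand kc) x := by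
    apply Continuous.ext_on hU hγc hMc
    intro x hx
    show γ x = GS.sup' hGSne fun kc => affS (Acand kc) (Ccand kc) x
    apply le_antisymm
    · obtain ⟨kc, hkc, hval⟩ := key x hx
      rw [← hval]
      exact Finset.le_sup' (f := fun kc => affS (Acand kc) (Ccand kc) x) hkc
    · apply Finset.sup'_le
      intro kc hkc
      exact (Finset.mem_filter.mp hkc).2 x
  obtain ⟨N, Aγ, Cγ, hrep⟩ := sup'_to_finMax GS hGSne Acand Ccand
  refine ⟨N, Aγ, Cγ, fun x => ?_⟩
  rw [← hrep x]
  exact congrFun hfuneq x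

lemma scalar_dc {n r : ℕ} {f : (Fin n → ℝ) → ℝ} (hf : Continuous f)
    (a : Fin r → Fin n → ℝ) (c : Fin r → ℝ)
    (hcov : ∀ x, ∃ k, f x = affS (a k) (c k) x) :
    ∃ (N M : ℕ) (Aγ : Fin (N+1) → Fin n → ℝ) (Cγ : Fin (N+1) → ℝ)
      (Aη : Fin (M+1) → Fin n → ℝ) (Cη : Fin (M+1) → ℝ),
      ∀ x, f x = finMax (Nat.succ_pos N) (fun t => affS (Aγ t) (Cγ t) x)
               - finMax (Nat.succ_pos M) (fun t => affS (Aη t) (Cη t) x) := by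
  obtain ⟨N, Aγ, Cγ, hγ⟩ := gamma_rep hf a c hcov
  obtain ⟨M, Aη, Cη, hη⟩ := eta_rep a c
  exact ⟨N, M, Aγ, Cγ, Aη, Cη, fun x => by rw [← hγ x, ← hη x]; ring⟩

end Aux

/-- every continuous PWA map ℝ^{nx} → ℝ^{nu} is, componentwise, a difference
of convex PWA functions (pointwise maxima of finitely many affine functions). -/


theorem pwa_componentwise_dc_decomposition (nx nu : ℕ) (K : (Fin nx → ℝ) → Fin nu → ℝ)
    (hcont : Continuous K) (hpwa : IsPWAOn Set.univ K) :
    ∃ (rγ rη : Fin nu → ℕ)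
      (aγ : ∀ i, Fin (rγ i + 1) → Fin nx → ℝ) (cγ : ∀ i, Fin (rγ i + 1) → ℝ)
      (aη : ∀ i, Fin (rη i + 1) → Fin nx → ℝ) (cη : ∀ i, Fin (rη i + 1) → ℝ),
      ∀ x, ∀ i, K x i =
        finMax (Nat.succ_pos (rγ i)) (fun t => (∑ j, aγ i t j * x j) + cγ i t) -
        finMax (Nat.succ_pos (rη i)) (fun t => (∑ j, aη i t j * x j) + cη i t) := by
  obtain ⟨r, R, Km, g, hpoly, hdisj, hunion, haff⟩ := hpwa
  have H : ∀ i : Fin nu, ∃ (N M : ℕ) (Aγ : Fin (N+1) → Fin nx → ℝ) (Cγ : Fin (N+1) → ℝ)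
      (Aη : Fin (M+1) → Fin nx → ℝ) (Cη : Fin (M+1) → ℝ),
      ∀ x, K x i = finMax (Nat.succ_pos N) (fun t => affS (Aγ t) (Cγ t) x)
                 - finMax (Nat.succ_pos M) (fun t => affS (Aη t) (Cη t) x) := by
    intro i
    have hfi : Continuous fun x => K x i := (continuous_apply i).comp hcont
    have hcov : ∀ x, ∃ k, (fun x => K x i) x = affS (fun j => Km k i j) (g k i) x := by
      intro x
      have hx : x ∈ ⋃ k, R k := by rw [hunion]; trivial
      obtain ⟨k, hk⟩ := Set.mem_iUnion.mp hx
      refine ⟨k, ?_⟩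
      have hval := haff k x hk
      show K x i = affS (fun j => Km k i j) (g k i) x
      rw [hval]
      rfl
    exact scalar_dc hfi (fun k j => Km k i j) (fun k => g k i) hcov
  choose rγ rη aγ cγ aη cη hH using H
  exact ⟨rγ, rη, aγ, cγ, aη, cη, fun x i => hH i x⟩
end

section
/- Fix n_x ≥ 1, n_u ≥ 1, and a width M with M ≥ 2 n_x. For every constant C > 0 there exists a depth L ≥ 1 and parameters θ such that the number of linear regions of the ReLU network N(·;θ,M,L) : ℝ^{n_x} → ℝ^{n_u} exceeds C times its number of parameters (n_x+1)M + (L−1)(M+1)M + (M+1)n_u; that is, the maximal number of linear regions grows exponentially in the depth L while the number of parameters grows only linearly in L. -/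
open Finset Matrix

noncomputable def tmap : ℝ → ℝ := fun s => 2 * max 0 s - 4 * max 0 (s - 1/2)

lemma tmap_nonpos {x : ℝ} (hx : x ≤ 0) : tmap x = 0 := by
  unfold tmap; rw [max_eq_left hx, max_eq_left (by linarith)]; ring

lemma tmap_left {x : ℝ} (h0 : 0 ≤ x) (h1 : x ≤ 1/2) : tmap x = 2 * x := by
  unfold tmap; rw [max_eq_right h0, max_eq_left (by linarith)]; ring

lemma tmap_right {x : ℝ} (h : 1/2 ≤ x) : tmap x = 2 - 2 * x := by
  unfold tmap; rw [max_eq_right (by linarith), max_eq_right (by linarith)]; ring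

lemma tmap_iter_nonpos {x : ℝ} (hx : x ≤ 0) : ∀ n, tmap^[n] x ≤ 0 := by
  have h0 : ∀ n, tmap^[n] (0:ℝ) = 0 := by
    intro n; induction n with
    | zero => rfl
    | succ n ih => rw [Function.iterate_succ_apply, tmap_nonpos le_rfl, ih]
  intro n
  cases n with
  | zero => exact hx
  | succ n => rw [Function.iterate_succ_apply, tmap_nonpos hx, h0]

lemma tmap_iter_formula : ∀ (n k : ℕ), k < 2^n → ∀ x : ℝ,
    (k : ℝ)/2^n ≤ x → x ≤ ((k:ℝ)+1)/2^n →
    tmap^[n] x = if Even k then 2^n * x - k else ((k:ℝ)+1) - 2^n * x := by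
  intro n
  induction n with
  | zero =>
    intro k hk x h1 h2
    interval_cases k
    simp
  | succ n ih =>
    intro k hk x h1 h2
    have P : (0:ℝ) < 2^n := by positivity
    have P2 : (0:ℝ) < 2^(n+1) := by positivity
    have hps : (2:ℝ)^(n+1) = 2^n * 2 := by rw [pow_succ]
    have h1' : (k:ℝ) ≤ x * 2^(n+1) := (div_le_iff₀ P2).mp h1
    have h2' : x * 2^(n+1) ≤ (k:ℝ)+1 := (le_div_iff₀ P2).mp h2
    rw [Function.iterate_succ_apply]
    by_cases hk2 : k < 2^n
    · have hkr : (k:ℝ) + 1 ≤ 2^n := by exact_mod_cast hk2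
      have hx0 : 0 ≤ x := by nlinarith [Nat.cast_nonneg (α := ℝ) k]
      have hxh : x ≤ 1/2 := by nlinarith
      rw [tmap_left hx0 hxh]
      rw [ih k hk2 (2*x) (by rw [div_le_iff₀ P]; nlinarith) (by rw [le_div_iff₀ P]; nlinarith)]
      split_ifs <;> rw [hps] <;> ring
    · push_neg at hk2
      have hkr : (2:ℝ)^n ≤ k := by exact_mod_cast hk2
      have hxh : 1/2 ≤ x := by nlinarith
      rw [tmap_right hxh]
      set k' : ℕ := 2^(n+1) - 1 - k with hk'def
      have hknat : k' + k + 1 = 2 * 2^n := by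
        have h2n : 2^(n+1) = 2*2^n := by ring
        omega
      have hk' : k' < 2^n := by omega
      have hkc : (k':ℝ) + k + 1 = 2 * 2^n := by exact_mod_cast congrArg (Nat.cast (R := ℝ)) hknat
      have hb1 : (k':ℝ)/2^n ≤ 2 - 2*x := by rw [div_le_iff₀ P]; nlinarith
      have hb2 : 2 - 2*x ≤ ((k':ℝ)+1)/2^n := by rw [le_div_iff₀ P]; nlinarith
      rw [ih k' hk' (2-2*x) hb1 hb2]
      have hpar : Even k' ↔ ¬ Even k := by
        rw [Nat.even_iff, Nat.even_iff]; omega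
      by_cases he : Even k
      · rw [if_pos he, if_neg (by simp [hpar, he])]
        nlinarith
      · rw [if_neg he, if_pos (hpar.mpr he)]
        nlinarith

noncomputable def gfun (n : ℕ) (x : ℝ) : ℝ := max 0 (tmap^[n] x)

lemma gfun_formula {n k : ℕ} (hk : k < 2^n) {x : ℝ}
    (h1 : (k : ℝ)/2^n ≤ x) (h2 : x ≤ ((k:ℝ)+1)/2^n) :
    gfun n x = if Even k then 2^n * x - k else ((k:ℝ)+1) - 2^n * x := by
  have P : (0:ℝ) < 2^n := by positivity
  have h1' : (k:ℝ) ≤ x * 2^n := (div_le_iff₀ P).mp h1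
  have h2' : x * 2^n ≤ (k:ℝ)+1 := (le_div_iff₀ P).mp h2
  unfold gfun
  rw [tmap_iter_formula n k hk x h1 h2]
  split_ifs <;> apply max_eq_right <;> nlinarith

lemma gfun_nonpos {n : ℕ} {x : ℝ} (hx : x ≤ 0) : gfun n x = 0 :=
  max_eq_left (tmap_iter_nonpos hx n)

lemma gfun_ge_one {n : ℕ} (hn : 1 ≤ n) {x : ℝ} (hx : 1 ≤ x) : gfun n x = 0 := by
  obtain ⟨m, rfl⟩ : ∃ m, n = m + 1 := ⟨n - 1, by omega⟩
  apply max_eq_left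
  rw [Function.iterate_succ_apply, tmap_right (by linarith)]
  exact tmap_iter_nonpos (by linarith) m


lemma gfun_kink {n : ℕ} (hn : 1 ≤ n) {j : ℕ} (hj : j ≤ 2^n) {δ : ℝ}
    (hδ0 : 0 < δ) (hδ1 : δ ≤ 1/2^n) :
    gfun n ((j:ℝ)/2^n - δ) + gfun n ((j:ℝ)/2^n + δ) ≠ 2 * gfun n ((j:ℝ)/2^n) := by
  have P : (0:ℝ) < 2^n := by positivity
  have hδ1' : δ * 2^n ≤ 1 := (le_div_iff₀ P).mp hδ1
  have hδ0' : 0 < δ * 2^n := by positivity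
  set b : ℝ := (j:ℝ)/2^n with hbdef
  have hbm : b * 2^n = j := by rw [hbdef]; field_simp
  rcases Nat.eq_zero_or_pos j with hj0 | hjpos
  · have hb0 : b = 0 := by rw [hbdef, hj0]; simp
    have e1 : gfun n (b - δ) = 0 := gfun_nonpos (by rw [hb0]; linarith)
    have e2 : gfun n b = 0 := gfun_nonpos (by rw [hb0])
    have e3 : gfun n (b + δ) = 2^n * (b + δ) - 0 := by
      have := gfun_formula (n := n) (k := 0) (by positivity) (x := b + δ)
        (h1 := by rw [div_le_iff₀ P]; push_cast; nlinarith)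
        (h2 := by rw [le_div_iff₀ P]; push_cast; nlinarith)
      simpa using this
    rw [e1, e2, e3, hb0]; nlinarith
  · have hj1c : ((j-1 : ℕ) : ℝ) = (j:ℝ) - 1 := by
      push_cast [Nat.cast_sub hjpos]; ring
    have hleft : gfun n (b - δ) = if Even (j-1) then 2^n * (b - δ) - ((j-1:ℕ):ℝ)
        else (((j-1:ℕ):ℝ)+1) - 2^n * (b - δ) := by
      apply gfun_formula (by omega)
      · rw [div_le_iff₀ P, hj1c]; nlinarith
      · rw [le_div_iff₀ P, hj1c]; nlinarith
    have hpar : Even (j-1) ↔ ¬ Even j := by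
      rw [Nat.even_iff, Nat.even_iff]; omega
    have hbm' : (2:ℝ)^n * b = j := by rw [mul_comm]; exact hbm
    rcases eq_or_lt_of_le hj with hjtop | hj2
    · -- j = 2^n
      have hb1 : b = 1 := by rw [hbdef, hjtop]; push_cast; field_simp
      have heven : Even j := by
        rw [hjtop]; exact Nat.even_pow.mpr ⟨even_two, by omega⟩
      have hnotev : ¬ Even (j-1) := by rw [hpar]; exact not_not_intro heven
      have e2 : gfun n b = 0 := by rw [hb1]; exact gfun_ge_one hn le_rfl
      have e3 : gfun n (b + δ) = 0 := by rw [hb1]; exact gfun_ge_one hn (by linarith)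
      rw [hleft, if_neg hnotev, e2, e3, hj1c]
      intro h
      rw [mul_sub] at h
      nlinarith [hbm']
    · -- 0 < j < 2^n
      have hmid : gfun n b = if Even j then 2^n * b - j else ((j:ℝ)+1) - 2^n * b := by
        apply gfun_formula hj2 le_rfl
        rw [le_div_iff₀ P, hbm]; linarith
      have hright : gfun n (b + δ) = if Even j then 2^n * (b + δ) - (j:ℝ)
          else ((j:ℝ)+1) - 2^n * (b + δ) := by
        apply gfun_formula hj2
        · rw [div_le_iff₀ P]; nlinarith
        · rw [le_div_iff₀ P]; nlinarith
      by_cases he : Even j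
      · rw [hmid, hleft, hright, if_pos he, if_pos he, if_neg (by simp [hpar, he]), hj1c]
        intro h
        rw [mul_sub, mul_add] at h; nlinarith [hbm']
      · rw [hmid, hleft, hright, if_neg he, if_neg he, if_pos (hpar.mpr he), hj1c]
        intro h
        rw [mul_sub, mul_add] at h; nlinarith [hbm']


lemma sum_single {n : ℕ} (j0 : Fin n) (c : ℝ) (x : Fin n → ℝ) :
    ∑ j, (if j = j0 then c else 0) * x j = c * x j0 := by
  simp [ite_mul, Finset.sum_ite_eq']

lemma sum_two {n : ℕ} (i0 i1 : Fin n) (hne : i0 ≠ i1) (a b : ℝ) (x : Fin n → ℝ) :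
    ∑ j, (if j = i0 then a else if j = i1 then b else 0) * x j = a * x i0 + b * x i1 := by
  have h : ∀ j, (if j = i0 then a else if j = i1 then b else 0) * x j
      = (if j = i0 then a * x j else 0) + (if j = i1 then b * x j else 0) := by
    intro j
    by_cases h1 : j = i0
    · subst h1; rw [if_pos rfl, if_pos rfl, if_neg hne]; ring
    · by_cases h2 : j = i1
      · subst h2; rw [if_neg h1, if_pos rfl, if_neg h1, if_pos rfl]; ring
      · rw [if_neg h1, if_neg h2, if_neg h1, if_neg h2]; ring
  simp_rw [h, Finset.sum_add_distrib, Finset.sum_ite_eq']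
  simp

lemma foldl_const_fun {α β : Type*} (f : β → β) :
    ∀ (l : List α) (init : β), l.foldl (fun x _ => f x) init = f^[l.length] init := by
  intro l
  induction l with
  | nil => intro init; rfl
  | cons a l ih =>
    intro init
    rw [List.foldl_cons, List.length_cons, Function.iterate_succ_apply, ih]



noncomputable def hiddenW (M : ℕ) (hM : 2 ≤ M) : Matrix (Fin M) (Fin M) ℝ :=
  fun i j => if i = (⟨0, by omega⟩ : Fin M) ∨ i = ⟨1, by omega⟩ then
        (if j = (⟨0, by omega⟩ : Fin M) then 2 else if j = ⟨1, by omega⟩ then -4 else 0) else 0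

noncomputable def hiddenb (M : ℕ) (hM : 2 ≤ M) : Fin M → ℝ :=
  fun i => if i = (⟨1, by omega⟩ : Fin M) then -(1/2) else 0

noncomputable def netParams (nx nu M L : ℕ) (hnx : 1 ≤ nx) (hM : 2 ≤ M) :
    ReLUNetParams nx nu M L where
  W1 := fun i j => if (i = ⟨0, by omega⟩ ∨ i = ⟨1, by omega⟩) ∧ j = ⟨0, by omega⟩ then 1 else 0
  b1 := fun i => if i = (⟨1, by omega⟩ : Fin M) then -(1/2) else 0
  W := fun _ => hiddenW M hM
  b := fun _ => hiddenb M hM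
  Wout := fun _ j => if j = (⟨0, by omega⟩ : Fin M) then 1 else 0
  bout := fun _ => 0

noncomputable def st (M : ℕ) (hM : 2 ≤ M) (s : ℝ) : Fin M → ℝ :=
  fun i => if i = ⟨0, by omega⟩ then max 0 s
    else if i = ⟨1, by omega⟩ then max 0 (s - 1/2) else 0

lemma layer1_eq {nx nu M L : ℕ} (hnx : 1 ≤ nx) (hM : 2 ≤ M) (x : Fin nx → ℝ) :
    reluVec (affineMapVec (netParams nx nu M L hnx hM).W1 ((netParams nx nu M L hnx hM)).b1 x)
      = st M hM (x ⟨0, by omega⟩) := by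
  have hne : (⟨0, by omega⟩ : Fin M) ≠ ⟨1, by omega⟩ := Fin.ne_of_val_ne (by simp)
  funext i
  show max 0 ((∑ j, (if (i = (⟨0, by omega⟩ : Fin M) ∨ i = ⟨1, by omega⟩) ∧ j = ⟨0, by omega⟩
        then (1:ℝ) else 0) * x j)
      + (if i = (⟨1, by omega⟩ : Fin M) then -(1/2) else 0)) = st M hM (x ⟨0, by omega⟩) i
  by_cases hi : i = (⟨0, by omega⟩ : Fin M) ∨ i = ⟨1, by omega⟩
  · have hsum : ∀ j : Fin nx,
        (if (i = (⟨0, by omega⟩ : Fin M) ∨ i = ⟨1, by omega⟩) ∧ j = (⟨0, by omega⟩ : Fin nx)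
          then (1:ℝ) else 0) * x j
        = (if j = (⟨0, by omega⟩ : Fin nx) then (1:ℝ) else 0) * x j := by
      intro j; simp only [hi, true_and]
    rw [Finset.sum_congr rfl (fun j _ => hsum j), sum_single]
    rcases hi with hi | hi <;> subst hi <;> unfold st
    · rw [if_neg hne, if_pos rfl]; congr 1; ring
    · rw [if_pos rfl, if_neg (Ne.symm hne), if_pos rfl]; congr 1; ring
  · push_neg at hi
    have hsum : ∀ j : Fin nx,
        (if (i = (⟨0, by omega⟩ : Fin M) ∨ i = ⟨1, by omega⟩) ∧ j = (⟨0, by omega⟩ : Fin nx)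
          then (1:ℝ) else 0) * x j = 0 := by
      intro j; rw [if_neg (by tauto), zero_mul]
    rw [Finset.sum_congr rfl (fun j _ => hsum j)]
    unfold st
    rw [if_neg hi.1, if_neg hi.2, if_neg hi.2]
    simp

lemma hidden_eq {M : ℕ} (hM : 2 ≤ M) (s : ℝ) :
    reluVec (affineMapVec (hiddenW M hM) (hiddenb M hM) (st M hM s)) = st M hM (tmap s) := by
  have hne : (⟨0, by omega⟩ : Fin M) ≠ ⟨1, by omega⟩ := Fin.ne_of_val_ne (by simp)
  have hst0 : st M hM s ⟨0, by omega⟩ = max 0 s := by unfold st; rw [if_pos rfl]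
  have hst1 : st M hM s ⟨1, by omega⟩ = max 0 (s - 1/2) := by
    unfold st; rw [if_neg (Ne.symm hne), if_pos rfl]
  funext i
  show max 0 ((∑ j, (if i = (⟨0, by omega⟩ : Fin M) ∨ i = ⟨1, by omega⟩ then
      (if j = (⟨0, by omega⟩ : Fin M) then (2:ℝ) else if j = ⟨1, by omega⟩ then -4 else 0)
        else 0) * st M hM s j)
      + (if i = (⟨1, by omega⟩ : Fin M) then -(1/2) else 0)) = st M hM (tmap s) i
  by_cases hi : i = (⟨0, by omega⟩ : Fin M) ∨ i = ⟨1, by omega⟩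
  · simp_rw [if_pos hi]
    rw [sum_two _ _ hne 2 (-4) (st M hM s), hst0, hst1]
    have htm : 2 * max 0 s + (-4) * max 0 (s - 1/2) = tmap s := by unfold tmap; ring
    rcases hi with hi | hi <;> subst hi <;> unfold st
    · rw [if_neg hne, if_pos rfl, htm]; congr 1; ring
    · rw [if_pos rfl, if_neg (Ne.symm hne), if_pos rfl, htm]; congr 1
  · simp_rw [if_neg hi, zero_mul, Finset.sum_const_zero]
    push_neg at hi
    unfold st
    rw [if_neg hi.1, if_neg hi.2, if_neg hi.2]
    simp

lemma iter_st {M : ℕ} (hM : 2 ≤ M) (m : ℕ) (s : ℝ) :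
    (fun ξ => reluVec (affineMapVec (hiddenW M hM) (hiddenb M hM) ξ))^[m] (st M hM s)
      = st M hM (tmap^[m] s) := by
  induction m with
  | zero => rfl
  | succ m ih =>
    rw [Function.iterate_succ_apply', ih, Function.iterate_succ_apply']
    exact hidden_eq hM (tmap^[m] s)

lemma net_eval {nx nu M : ℕ} (hnx : 1 ≤ nx) (hM : 2 ≤ M) (n : ℕ) (x : Fin nx → ℝ) :
    (netParams nx nu M (n+1) hnx hM).eval x
      = fun _ => max 0 (tmap^[n] (x ⟨0, by omega⟩)) := by
  set p := netParams nx nu M (n+1) hnx hM with hp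
  funext u
  show affineMapVec p.Wout p.bout
    ((List.finRange (n+1-1)).foldl (fun ξ l => reluVec (affineMapVec (p.W l) (p.b l) ξ))
      (reluVec (affineMapVec p.W1 p.b1 x))) u = _
  have hstep : (fun (ξ : Fin M → ℝ) (l : Fin (n+1-1)) =>
        reluVec (affineMapVec (p.W l) (p.b l) ξ))
      = fun ξ _ => reluVec (affineMapVec (hiddenW M hM) (hiddenb M hM) ξ) := rfl
  rw [hstep, foldl_const_fun, List.length_finRange, layer1_eq hnx hM,
    show n+1-1 = n from rfl, iter_st hM]
  show (∑ j, (if j = (⟨0, by omega⟩ : Fin M) then (1:ℝ) else 0)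
      * st M hM (tmap^[n] (x ⟨0, by omega⟩)) j) + 0 = _
  rw [sum_single]
  unfold st
  rw [if_pos rfl]
  ring_nf

lemma slab_region {nx nu : ℕ} (hnx : 1 ≤ nx) (hnu : 1 ≤ nu) {n : ℕ} (hn : 1 ≤ n)
    (f : (Fin nx → ℝ) → Fin nu → ℝ)
    (hf : ∀ x, f x = fun _ => gfun n (x ⟨0, by omega⟩))
    (k : ℕ) (hk : k < 2^n) :
    IsLinearRegion f {x | (k:ℝ)/2^n < x ⟨0, by omega⟩ ∧ x ⟨0, by omega⟩ < ((k:ℝ)+1)/2^n} := by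
  have P : (0:ℝ) < 2^n := by positivity
  set j0 : Fin nx := ⟨0, by omega⟩ with hj0
  set a : ℝ := (k:ℝ)/2^n with ha
  set b : ℝ := ((k:ℝ)+1)/2^n with hb
  have hab : a < b := by rw [ha, hb, div_lt_div_iff_of_pos_right P]; linarith
  set S : Set (Fin nx → ℝ) := {x | a < x j0 ∧ x j0 < b} with hS
  have hSpre : S = (fun x : Fin nx → ℝ => x j0) ⁻¹' Set.Ioo a b := rfl
  have hSopen : IsOpen S := by
    rw [hSpre]; exact isOpen_Ioo.preimage (continuous_apply j0)
  have hSne : S.Nonempty := by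
    refine ⟨fun _ => (a+b)/2, ?_, ?_⟩ <;> simp only [hS, Set.mem_setOf_eq] <;> linarith
  have hSconv : Convex ℝ S := by
    rw [hSpre]
    exact (convex_Ioo a b).linear_preimage ((LinearMap.proj j0 : ((Fin nx) → ℝ) →ₗ[ℝ] ℝ))
  refine ⟨hSne, hSopen, ⟨hSne, hSconv.isPreconnected⟩, ?_, ?_⟩
  · -- affine on S
    by_cases he : Even k
    · refine ⟨fun _ j' => if j' = j0 then (2:ℝ)^n else 0, fun _ => -(k:ℝ), ?_⟩
      intro x hx
      rw [hf x]
      funext u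
      show gfun n (x j0) = (∑ j', (if j' = j0 then (2:ℝ)^n else 0) * x j') + -(k:ℝ)
      rw [sum_single, gfun_formula hk (le_of_lt hx.1) (le_of_lt hx.2), if_pos he]
      ring
    · refine ⟨fun _ j' => if j' = j0 then -(2:ℝ)^n else 0, fun _ => (k:ℝ)+1, ?_⟩
      intro x hx
      rw [hf x]
      funext u
      show gfun n (x j0) = (∑ j', (if j' = j0 then -(2:ℝ)^n else 0) * x j') + ((k:ℝ)+1)
      rw [sum_single, gfun_formula hk (le_of_lt hx.1) (le_of_lt hx.2), if_neg he]
      ring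
  · -- maximality
    intro S' hS'o hS'c hss hAff
    obtain ⟨A, c, hA⟩ := hAff
    obtain ⟨hsub, hne⟩ := hss
    -- find frontier point in S'
    have hfr : ∃ p ∈ S', p ∈ frontier S := by
      by_contra hno
      push_neg at hno
      have hcover : S' ⊆ S ∪ (closure S)ᶜ := by
        intro p hp
        by_cases hcl : p ∈ closure S
        · left
          have hd : p ∈ interior S ∪ frontier S := by
            rw [← closure_eq_interior_union_frontier S]; exact hcl
          have : p ∈ interior S := by
            rcases hd with h | h
            · exact h
            · exact absurd h (hno p hp)
          rwa [hSopen.interior_eq] at this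
        · right; exact hcl
      have : S' ⊆ S := by
        apply hS'c.isPreconnected.subset_left_of_subset_union hSopen
          isClosed_closure.isOpen_compl
          (disjoint_compl_right.mono_left subset_closure) hcover
        obtain ⟨y, hy⟩ := hSne
        exact ⟨y, hsub hy, hy⟩
      exact hne this
    obtain ⟨p, hpS', hpfr⟩ := hfr
    have hpcl : a ≤ p j0 ∧ p j0 ≤ b := by
      have h1 : closure S ⊆ {x : Fin nx → ℝ | a ≤ x j0 ∧ x j0 ≤ b} := by
        apply closure_minimal
        · intro x hx; exact ⟨le_of_lt hx.1, le_of_lt hx.2⟩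
        · exact (isClosed_Icc.preimage (continuous_apply j0) :
            IsClosed ((fun x : Fin nx → ℝ => x j0) ⁻¹' Set.Icc a b))
      exact h1 (frontier_subset_closure hpfr)
    have hpnotS : p ∉ S := by
      rw [hSopen.frontier_eq] at hpfr
      exact hpfr.2
    have hpj : ∃ jj : ℕ, jj ≤ 2^n ∧ p j0 = (jj:ℝ)/2^n := by
      rcases eq_or_lt_of_le hpcl.1 with h1 | h1
      · exact ⟨k, by omega, h1.symm⟩
      · rcases eq_or_lt_of_le hpcl.2 with h2 | h2
        · exact ⟨k+1, by omega, by rw [h2, hb]; push_cast; ring⟩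
        · exact absurd ⟨h1, h2⟩ hpnotS
    obtain ⟨jj, hjj, hpj0⟩ := hpj
    obtain ⟨ε, hε, hball⟩ := Metric.isOpen_iff.mp hS'o p hpS'
    set δ : ℝ := min (ε/2) (1/2^n) with hδ
    have hδ0 : 0 < δ := lt_min (by linarith) (by positivity)
    have hδ1 : δ ≤ 1/2^n := min_le_right _ _
    have hδε : δ < ε := lt_of_le_of_lt (min_le_left _ _) (by linarith)
    have hmem : ∀ v : ℝ, |v - p j0| ≤ δ → Function.update p j0 v ∈ S' := by
      intro v hv
      apply hball
      rw [Metric.mem_ball]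
      refine lt_of_le_of_lt ((dist_pi_le_iff hδ0.le).mpr ?_) hδε
      intro i
      by_cases h : i = j0
      · subst h; rw [Function.update_self, Real.dist_eq]; exact hv
      · rw [Function.update_of_ne h, dist_self]; exact hδ0.le
    have hval : ∀ v : ℝ, Function.update p j0 v ∈ S' →
        gfun n v = (∑ j', A ⟨0, by omega⟩ j' * Function.update p j0 v j') + c ⟨0, by omega⟩ := by
      intro v hv
      have := congrFun (hA _ hv) ⟨0, by omega⟩
      rw [hf] at this
      simpa [Function.update_self, affineMapVec] using this
    have hplus := hval (p j0 + δ) (hmem _ (by rw [add_sub_cancel_left, abs_of_pos hδ0]))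
    have hminus := hval (p j0 - δ) (hmem _ (by rw [sub_sub_cancel_left, abs_neg, abs_of_pos hδ0]))
    have hzero := hval (p j0) (by rwa [Function.update_eq_self])
    have hsum : (∑ j', A ⟨0, by omega⟩ j' * Function.update p j0 (p j0 + δ) j')
        + (∑ j', A ⟨0, by omega⟩ j' * Function.update p j0 (p j0 - δ) j')
        = 2 * ∑ j', A ⟨0, by omega⟩ j' * Function.update p j0 (p j0) j' := by
      rw [← Finset.sum_add_distrib, Finset.mul_sum]
      apply Finset.sum_congr rfl
      intro j' _
      by_cases h : j' = j0
      · subst h; rw [Function.update_self, Function.update_self, Function.update_self]; ring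
      · rw [Function.update_of_ne h, Function.update_of_ne h, Function.update_of_ne h]; ring
    have hkinkeq : gfun n (p j0 - δ) + gfun n (p j0 + δ) = 2 * gfun n (p j0) := by
      linarith [hplus, hminus, hzero, hsum]
    rw [hpj0] at hkinkeq
    exact gfun_kink hn hjj hδ0 hδ1 hkinkeq

/-- the number of linear regions of deep ReLU networks of fixed width
`M ≥ 2 nx` can exceed any constant multiple of the number of parameters. -/
theorem regions_outgrow_parameters (nx nu M : ℕ)
    (hnx : 1 ≤ nx) (hnu : 1 ≤ nu) (hM : 2 * nx ≤ M) (C : ℝ) (hC : 0 < C) :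
    ∃ L : ℕ, 1 ≤ L ∧
      ∃ (θ : ReLUNetParams nx nu M L) (k : ℕ) (S : Fin k → Set (Fin nx → ℝ)),
        (∀ i j, i ≠ j → Disjoint (S i) (S j)) ∧
        (∀ i, IsLinearRegion θ.eval (S i)) ∧
        C * ((nx + 1) * M + (L - 1) * (M + 1) * M + (M + 1) * nu : ℝ) < (k : ℝ) := by
  have hM2 : 2 ≤ M := by omega
  obtain ⟨A, hAdef⟩ : ∃ A : ℝ, A = ((nx:ℝ)+1)*M + ((M:ℝ)+1)*nu := ⟨_, rfl⟩
  obtain ⟨B, hBdef⟩ : ∃ B : ℝ, B = ((M:ℝ)+1)*M := ⟨_, rfl⟩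
  have hA0 : 0 ≤ A := by rw [hAdef]; positivity
  have hB0 : 0 ≤ B := by rw [hBdef]; positivity
  obtain ⟨D, hDdef⟩ : ∃ D : ℝ, D = C*(A+B) + 1 := ⟨_, rfl⟩
  have hD1 : 1 ≤ D := by rw [hDdef]; nlinarith
  obtain ⟨m, hm⟩ := pow_unbounded_of_one_lt (R := ℝ) (4*D) one_lt_two
  set n := 2*m with hndef
  have pm : (0:ℝ) < 2^m := by positivity
  have hm1 : 1 ≤ m := by
    by_contra h
    push_neg at h
    interval_cases m
    · norm_num at hm; linarith
  have hn1 : 1 ≤ n := by omega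
  refine ⟨n+1, by omega, netParams nx nu M (n+1) hnx hM2, 2^n,
    fun k => {x | ((k : ℕ):ℝ)/2^n < x ⟨0, by omega⟩ ∧ x ⟨0, by omega⟩ < (((k : ℕ):ℝ)+1)/2^n},
    ?_, ?_, ?_⟩
  · intro i j hij
    rw [Set.disjoint_left]
    intro x hxi hxj
    have P : (0:ℝ) < 2^n := by positivity
    have hvne : (i:ℕ) ≠ (j:ℕ) := fun h => hij (Fin.ext h)
    rcases lt_or_gt_of_ne hvne with h | h
    · have hcast : ((i:ℕ):ℝ) + 1 ≤ ((j:ℕ):ℝ) := by exact_mod_cast h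
      have h1 := hxi.2
      have h2 := hxj.1
      have h3 : (((i:ℕ):ℝ)+1)/2^n ≤ ((j:ℕ):ℝ)/2^n :=
        (div_le_div_iff_of_pos_right P).mpr hcast
      linarith
    · have hcast : ((j:ℕ):ℝ) + 1 ≤ ((i:ℕ):ℝ) := by exact_mod_cast h
      have h1 := hxj.2
      have h2 := hxi.1
      have h3 : (((j:ℕ):ℝ)+1)/2^n ≤ ((i:ℕ):ℝ)/2^n :=
        (div_le_div_iff_of_pos_right P).mpr hcast
      linarith
  · intro i
    exact slab_region hnx hnu hn1 (netParams nx nu M (n+1) hnx hM2).eval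
      (fun x => net_eval hnx hM2 n x) (i : ℕ) i.isLt
  · have hcast2 : ((2^n : ℕ) : ℝ) = (2^m)^2 := by
      push_cast
      rw [hndef, show 2*m = m*2 from mul_comm 2 m, pow_mul]
    rw [hcast2]
    have hL : ((n+1 : ℕ) : ℝ) - 1 = (n:ℝ) := by push_cast; ring
    have hmr : (m:ℝ) + 1 ≤ 2^m := by exact_mod_cast (Nat.lt_two_pow_self : m < 2^m)
    have hCA : C*A ≤ D - 1 := by rw [hDdef]; nlinarith
    have hCB : C*B ≤ D - 1 := by rw [hDdef]; nlinarith
    have hnn : (n:ℝ) = 2*(m:ℝ) := by rw [hndef]; push_cast; ring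
    have key : D*(2*(m:ℝ)+1) < (2^m)^2 := by
      have e1 : (2*(m:ℝ)+1) < 2*2^m := by linarith
      have e2 : D*(2*(m:ℝ)+1) < D*(2*2^m) := by
        apply mul_lt_mul_of_pos_left e1 (by linarith)
      have e5 : (2*D)*2^m < (2^m/2)*2^m := by
        apply mul_lt_mul_of_pos_right (by linarith) pm
      nlinarith
    have hexpr : ((nx:ℝ) + 1) * M + (((n+1 : ℕ) : ℝ) - 1) * ((M:ℝ) + 1) * M + ((M:ℝ) + 1) * nu
        = A + (n:ℝ)*B := by
      rw [hL, hAdef, hBdef]; ring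
    rw [hexpr, hnn]
    have h2m : (0:ℝ) ≤ 2*(m:ℝ) := by positivity
    have hmul := mul_le_mul_of_nonneg_left hCB h2m
    have hfin : C*(A + (2*(m:ℝ))*B) ≤ (D-1)*(2*(m:ℝ)+1) := by
      ring_nf
      ring_nf at hmul hCA
      linarith [hCA, hmul]
    have hstep : (D-1)*(2*(m:ℝ)+1) ≤ D*(2*(m:ℝ)+1) :=
      mul_le_mul_of_nonneg_right (by linarith) (by positivity)
    exact lt_of_le_of_lt (le_trans hfin hstep) key
end
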